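/- For n = 2 and λ ∈ Λ(2,r), the algebra S_ℤ(λ) = 1_λ S_ℤ(2,r) 1_λ has ℤ-basis {1_λ f^{(a)} e^{(a)} 1_λ : 0 ≤ a ≤ min(λ_1, λ_2)} and also ℤ-basis {1_λ e^{(a)} f^{(a)} 1_λ : 0 ≤ a ≤ min(λ_1, λ_2)}; in particular dim S(λ) = 1 + min(λ_1, λ_2), and S(λ) is a commutative algebra generated by the single element 1_λ f e 1_λ. -/

import Mathlib

/-!
STATEMENT 16: For `n = 2` and `λ ∈ Λ(2,r)`, the algebra `S_ℤ(λ) = 1_λ S_ℤ(2,r) 1_λ` has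
`ℤ`-basis `{1_λ f^{(a)} e^{(a)} 1_λ : 0 ≤ a ≤ min(λ_1, λ_2)}` and also `ℤ`-basis
`{1_λ e^{(a)} f^{(a)} 1_λ : 0 ≤ a ≤ min(λ_1, λ_2)}`; in particular
`dim S(λ) = 1 + min(λ_1, λ_2)`, and `S(λ)` is a commutative algebra generated by the
single element `1_λ f e 1_λ`.

Here `e = e_{12}`, `f = e_{21}` act on `E^{⊗r}` (`E = ℚ²`) via the derived action,
`S_ℤ(2,r)` is the image of Kostant's `ℤ`-form (generated by divided powers and binomials)
in `End_ℚ(E^{⊗r})`, and `S_ℚ(λ)` is modelled as `1_λ End_{Σ_r}(E^{⊗r}) 1_λ`.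
-/

open scoped BigOperators

namespace SchurPaper

variable (r : ℕ)

abbrev TSpQ := (Fin r → Fin 2) → ℚ

def wt (i : Fin r → Fin 2) : Fin 2 → ℕ :=
  fun j => (Finset.univ.filter fun k => i k = j).card

lemma wt_comp (i : Fin r → Fin 2) (σ : Equiv.Perm (Fin r)) :
    wt r (i ∘ σ) = wt r i := by
  funext j
  exact Finset.card_equiv σ (fun k => by simp [Function.comp])

def placePerm (σ : Equiv.Perm (Fin r)) : TSpQ r →ₗ[ℚ] TSpQ r :=
  LinearMap.funLeft ℚ ℚ fun i => i ∘ σ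

def proj (lam : Fin 2 → ℕ) : TSpQ r →ₗ[ℚ] TSpQ r where
  toFun f := fun i => if wt r i = lam then f i else 0
  map_add' f g := by funext i; by_cases h : wt r i = lam <;> simp [h]
  map_smul' c f := by funext i; by_cases h : wt r i = lam <;> simp [h]

/-- `S_ℚ(λ) = 1_λ End_{Σ_r}(E^{⊗r}) 1_λ`. -/
def heckeBimodule (lam mu : Fin 2 → ℕ) : Submodule ℚ (Module.End ℚ (TSpQ r)) where
  carrier := {x | (∀ σ, x ∘ₗ placePerm r σ = placePerm r σ ∘ₗ x) ∧
      proj r lam ∘ₗ x ∘ₗ proj r mu = x}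
  add_mem' := by
    rintro x y ⟨hx1, hx2⟩ ⟨hy1, hy2⟩
    refine ⟨fun σ => ?_, ?_⟩
    · rw [LinearMap.add_comp, LinearMap.comp_add, hx1 σ, hy1 σ]
    · conv_lhs => rw [LinearMap.add_comp, LinearMap.comp_add]
      rw [hx2, hy2]
  zero_mem' := ⟨fun σ => by simp, by simp⟩
  smul_mem' := by
    rintro c x ⟨hx1, hx2⟩
    refine ⟨fun σ => ?_, ?_⟩
    · rw [LinearMap.smul_comp, LinearMap.comp_smul, hx1 σ]
    · conv_lhs => rw [LinearMap.smul_comp, LinearMap.comp_smul]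
      rw [hx2]

noncomputable def dAct (X : Matrix (Fin 2) (Fin 2) ℚ) : Module.End ℚ (TSpQ r) :=
  Matrix.toLin' (Matrix.of fun i j : Fin r → Fin 2 =>
    ∑ k, if ∀ l, l ≠ k → i l = j l then X (i k) (j k) else 0)

noncomputable def divPow (x : Module.End ℚ (TSpQ r)) (a : ℕ) : Module.End ℚ (TSpQ r) :=
  ((a.factorial : ℚ)⁻¹) • x ^ a

noncomputable def binomOp (y : Module.End ℚ (TSpQ r)) (b : ℕ) : Module.End ℚ (TSpQ r) :=
  ((b.factorial : ℚ)⁻¹) • ((List.range b).map fun t => y - (t : ℚ) • 1).prod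

/-- `e = e_{12}` acting on tensor space. -/
noncomputable def Eop : Module.End ℚ (TSpQ r) := dAct r (Matrix.single 0 1 1)

/-- `f = e_{21}` acting on tensor space. -/
noncomputable def Fop : Module.End ℚ (TSpQ r) := dAct r (Matrix.single 1 0 1)

/-- Kostant `ℤ`-form generators for `gl_2`. -/
noncomputable def kostantGens : Set (Module.End ℚ (TSpQ r)) :=
  {x | (∃ a : ℕ, x = divPow r (Eop r) a ∨ x = divPow r (Fop r) a) ∨
       (∃ (i : Fin 2) (b : ℕ), x = binomOp r (dAct r (Matrix.single i i 1)) b)}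

noncomputable def SZ : Subalgebra ℤ (Module.End ℚ (TSpQ r)) :=
  Algebra.adjoin ℤ (kostantGens r)

/-- `S_ℤ(λ) = 1_λ S_ℤ(2,r) 1_λ`. -/
noncomputable def heckeLat (lam : Fin 2 → ℕ) : Submodule ℤ (Module.End ℚ (TSpQ r)) :=
  Submodule.map
    ((LinearMap.mulLeft ℤ (proj r lam)).comp (LinearMap.mulRight ℤ (proj r lam)))
    (Subalgebra.toSubmodule (SZ r))


/-! ### Auxiliary development -/

section Aux

open Finset

noncomputable def ent : Module.End ℚ (TSpQ r) ≃ₐ[ℚ] Matrix (Fin r → Fin 2) (Fin r → Fin 2) ℚ :=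
  LinearMap.toMatrixAlgEquiv'

variable {r}

lemma ent_apply (x : Module.End ℚ (TSpQ r)) (i j : Fin r → Fin 2) :
    ent r x i j = x (fun j' => if j' = j then 1 else 0) i := by
  show LinearMap.toMatrixAlgEquiv' x i j = _
  rw [LinearMap.toMatrixAlgEquiv'_apply]
  have h : (Pi.single j 1 : TSpQ r) = fun j' => if j' = j then 1 else 0 := by
    funext j'
    simp [Pi.single_apply]
  rw [h]

lemma ent_toLin' (A : Matrix (Fin r → Fin 2) (Fin r → Fin 2) ℚ) :
    ent r (Matrix.toLin' A) = A := by
  ext i j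
  rw [ent_apply, Matrix.toLin'_apply]
  simp [Matrix.mulVec, dotProduct]

lemma ent_proj (lam : Fin 2 → ℕ) :
    ent r (proj r lam) = Matrix.diagonal (fun i => if wt r i = lam then 1 else 0) := by
  ext i j
  rw [ent_apply]
  show (if wt r i = lam then _ else 0) = _
  rw [Matrix.diagonal_apply]
  split_ifs <;> simp_all


def onesF (i : Fin r → Fin 2) : Finset (Fin r) := Finset.univ.filter fun l => i l = 1

def ofOnes (S : Finset (Fin r)) : Fin r → Fin 2 := fun l => if l ∈ S then 1 else 0

@[simp] lemma mem_onesF {i : Fin r → Fin 2} {l : Fin r} : l ∈ onesF i ↔ i l = 1 := by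
  simp [onesF]

@[simp] lemma onesF_ofOnes (S : Finset (Fin r)) : onesF (ofOnes S) = S := by
  ext l
  simp only [mem_onesF, ofOnes]
  split_ifs with h <;> simp [h]

lemma eq_of_onesF_eq {i j : Fin r → Fin 2} (h : onesF i = onesF j) : i = j := by
  funext l
  have h1 := Finset.ext_iff.1 h l
  simp only [mem_onesF] at h1
  omega

lemma onesF_comp (i : Fin r → Fin 2) (σ : Equiv.Perm (Fin r)) :
    onesF (i ∘ σ) = (onesF i).image σ.symm := by
  ext l
  simp only [mem_onesF, Finset.mem_image, Function.comp_apply]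
  constructor
  · intro h; exact ⟨σ l, by simpa using h, by simp⟩
  · rintro ⟨a, ha, rfl⟩; simpa using ha

-- counting lemmas
lemma card_ones_subset (C : Finset (Fin r)) (s : ℕ) :
    (Finset.univ.filter fun k : Fin r → Fin 2 => onesF k ⊆ C ∧ (onesF k).card = s).card
      = C.card.choose s := by
  rw [← Finset.card_powersetCard]
  apply Finset.card_bij (fun k _ => onesF k)
  · intro k hk
    simp only [Finset.mem_filter] at hk
    simp [Finset.mem_powersetCard, hk.2.1, hk.2.2]
  · intro a _ b _ h; exact eq_of_onesF_eq h
  · intro S hS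
    rw [Finset.mem_powersetCard] at hS
    exact ⟨ofOnes S, by simp [hS.1, hS.2], by simp⟩

lemma card_ones_supset (U : Finset (Fin r)) (s : ℕ) (h : U.card ≤ s) :
    (Finset.univ.filter fun k : Fin r → Fin 2 => U ⊆ onesF k ∧ (onesF k).card = s).card
      = (r - U.card).choose (s - U.card) := by
  have hUc : Uᶜ.card = r - U.card := by
    rw [Finset.card_compl]; simp
  rw [← hUc, ← Finset.card_powersetCard]
  apply Finset.card_bij (fun k _ => onesF k \ U)
  · intro k hk
    simp only [Finset.mem_filter] at hk
    rw [Finset.mem_powersetCard]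
    constructor
    · intro l hl
      simp only [Finset.mem_sdiff] at hl
      simp [hl.2]
    · rw [Finset.card_sdiff_of_subset hk.2.1, hk.2.2]
  · intro a ha b hb hab
    simp only [Finset.mem_filter] at ha hb
    apply eq_of_onesF_eq
    have : onesF a \ U ∪ U = onesF b \ U ∪ U := by rw [hab]
    rwa [Finset.sdiff_union_of_subset ha.2.1, Finset.sdiff_union_of_subset hb.2.1] at this
  · intro T hT
    rw [Finset.mem_powersetCard] at hT
    have hdisj : Disjoint U T := by
      rw [Finset.disjoint_left]
      intro a haU haT
      have := hT.1 haT
      simp at this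
      exact this haU
    refine ⟨ofOnes (U ∪ T), ?_, ?_⟩
    · simp only [Finset.mem_filter, onesF_ofOnes]
      refine ⟨Finset.mem_univ _, Finset.subset_union_left, ?_⟩
      rw [Finset.card_union_of_disjoint hdisj, hT.2]
      omega
    · rw [onesF_ofOnes, Finset.union_sdiff_cancel_left hdisj]

lemma card_ones_supset_zero (U : Finset (Fin r)) (s : ℕ) (h : s < U.card) :
    (Finset.univ.filter fun k : Fin r → Fin 2 => U ⊆ onesF k ∧ (onesF k).card = s).card = 0 := by
  rw [Finset.card_eq_zero, Finset.filter_eq_empty_iff]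
  rintro k - ⟨h1, h2⟩
  have := Finset.card_le_card h1
  omega

-- continuing: sum helper and E entries
lemma sum_ite_card (p q : (Fin r → Fin 2) → Prop) [DecidablePred p] [DecidablePred q] (c d : ℚ) :
    ∑ k : Fin r → Fin 2, (if p k then c else 0) * (if q k then d else 0)
      = ((Finset.univ.filter fun k => p k ∧ q k).card : ℚ) * (c * d) := by
  rw [Finset.card_filter]
  push_cast
  rw [Finset.sum_mul]
  refine Finset.sum_congr rfl fun k _ => ?_
  by_cases h1 : p k <;> by_cases h2 : q k <;> simp [h1, h2]

lemma ent_E (i j : Fin r → Fin 2) :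
    ent r (Eop r) i j
      = if onesF i ⊆ onesF j ∧ (onesF j \ onesF i).card = 1 then 1 else 0 := by
  rw [Eop, dAct, ent_toLin']
  show (∑ k, if ∀ l, l ≠ k → i l = j l then Matrix.single 0 1 1 (i k) (j k) else 0) = _
  have hterm : ∀ k, (if ∀ l, l ≠ k → i l = j l then Matrix.single 0 1 1 (i k) (j k) else 0)
      = if ((∀ l, l ≠ k → i l = j l) ∧ i k = 0 ∧ j k = 1) then (1:ℚ) else 0 := by
    intro k
    by_cases h1 : ∀ l, l ≠ k → i l = j l
    · rw [if_pos h1, Matrix.single]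
      by_cases h2 : i k = 0 ∧ j k = 1
      · rw [if_pos ⟨h1, h2⟩]
        simp only [Matrix.of_apply]
        rw [if_pos ⟨h2.1.symm, h2.2.symm⟩]
      · rw [if_neg (by tauto)]
        simp only [Matrix.of_apply]
        rw [if_neg]
        rintro ⟨ha, hb⟩
        exact h2 ⟨ha.symm, hb.symm⟩
    · rw [if_neg h1, if_neg (by tauto)]
  have key : ∀ k, ((∀ l, l ≠ k → i l = j l) ∧ i k = 0 ∧ j k = 1)
      ↔ (onesF i ⊆ onesF j ∧ onesF j \ onesF i = {k}) := by
    intro k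
    constructor
    · rintro ⟨h1, h2, h3⟩
      constructor
      · intro l hl
        rw [mem_onesF] at hl ⊢
        rcases eq_or_ne l k with rfl | hne
        · omega
        · rw [← h1 l hne]; exact hl
      · ext l
        simp only [Finset.mem_sdiff, mem_onesF, Finset.mem_singleton]
        constructor
        · rintro ⟨hj, hi⟩
          by_contra hne
          have := h1 l hne
          omega
        · rintro rfl; omega
    · rintro ⟨h1, h2⟩
      have hk : k ∈ onesF j \ onesF i := by rw [h2]; exact Finset.mem_singleton_self k
      simp only [Finset.mem_sdiff, mem_onesF] at hk
      refine ⟨?_, by omega, hk.1⟩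
      intro l hl
      have : l ∉ onesF j \ onesF i := by rw [h2]; simpa using hl
      simp only [Finset.mem_sdiff, mem_onesF] at this
      have hsub := @h1 l
      simp only [mem_onesF] at hsub
      omega
  rw [Finset.sum_congr rfl fun k _ => hterm k]
  rw [Finset.sum_congr rfl fun k _ => if_congr (key k) rfl rfl]
  by_cases hc : onesF i ⊆ onesF j ∧ (onesF j \ onesF i).card = 1
  · obtain ⟨x, hx⟩ := Finset.card_eq_one.1 hc.2
    rw [if_pos hc]
    have hkx : ∀ k, (onesF i ⊆ onesF j ∧ onesF j \ onesF i = {k}) ↔ k = x := by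
      intro k
      constructor
      · rintro ⟨-, h⟩
        rw [hx] at h
        exact (Finset.singleton_inj.1 h.symm)
      · rintro rfl; exact ⟨hc.1, hx⟩
    rw [Finset.sum_congr rfl fun k _ => if_congr (hkx k) rfl rfl,
      Finset.sum_ite_eq' Finset.univ x fun _ => (1:ℚ)]
    simp
  · rw [if_neg hc]
    apply Finset.sum_eq_zero
    intro k _
    rw [if_neg]
    rintro ⟨h1, h2⟩
    exact hc ⟨h1, by rw [h2]; simp⟩

lemma ent_Epow (a : ℕ) (i j : Fin r → Fin 2) :
    ent r (Eop r ^ a) i j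
      = if onesF i ⊆ onesF j ∧ (onesF j \ onesF i).card = a then (a.factorial : ℚ) else 0 := by
  induction a generalizing i j with
  | zero =>
    rw [pow_zero, map_one, Matrix.one_apply]
    have : (i = j) ↔ (onesF i ⊆ onesF j ∧ (onesF j \ onesF i).card = 0) := by
      constructor
      · rintro rfl; simp
      · rintro ⟨h1, h2⟩
        rw [Finset.card_eq_zero, Finset.sdiff_eq_empty_iff_subset] at h2
        exact eq_of_onesF_eq (Finset.Subset.antisymm h1 h2)
    rw [if_congr this rfl rfl]
    simp
  | succ a ih =>
    rw [pow_succ, map_mul, Matrix.mul_apply]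
    have hterm : ∀ k, ent r (Eop r ^ a) i k * ent r (Eop r) k j
        = (if (onesF i ⊆ onesF k ∧ (onesF k \ onesF i).card = a) then (a.factorial : ℚ) else 0)
          * (if (onesF k ⊆ onesF j ∧ (onesF j \ onesF k).card = 1) then 1 else 0) := by
      intro k; rw [ih, ent_E]
    rw [Finset.sum_congr rfl fun k _ => hterm k, sum_ite_card]
    set S := Finset.univ.filter fun k : Fin r → Fin 2 =>
      (onesF i ⊆ onesF k ∧ (onesF k \ onesF i).card = a)
        ∧ (onesF k ⊆ onesF j ∧ (onesF j \ onesF k).card = 1) with hS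
    have hcard : S.card = if onesF i ⊆ onesF j ∧ (onesF j \ onesF i).card = a + 1
        then a + 1 else 0 := by
      by_cases hc : onesF i ⊆ onesF j ∧ (onesF j \ onesF i).card = a + 1
      · rw [if_pos hc]
        rw [← hc.2]
        apply (Finset.card_bij (fun (x : Fin r) (_ : x ∈ onesF j \ onesF i) =>
          ofOnes (onesF j \ {x})) ?_ ?_ ?_).symm
        · intro x hx
          simp only [Finset.mem_sdiff, mem_onesF] at hx
          have hxj : x ∈ onesF j := mem_onesF.2 hx.1
          have hxi : x ∉ onesF i := by simp [hx.2]
          simp only [hS, Finset.mem_filter, onesF_ofOnes]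
          refine ⟨Finset.mem_univ _, ⟨?_, ?_⟩, ⟨Finset.sdiff_subset, ?_⟩⟩
          · intro l hl
            simp only [Finset.mem_sdiff, Finset.mem_singleton]
            exact ⟨hc.1 hl, by rintro rfl; exact hxi hl⟩
          · rw [sdiff_right_comm,
              Finset.card_sdiff_of_subset (Finset.singleton_subset_iff.2 (Finset.mem_sdiff.2 ⟨hxj, hxi⟩)),
              hc.2, Finset.card_singleton]
            omega
          · rw [Finset.sdiff_sdiff_self_left, Finset.inter_comm,
              Finset.inter_eq_left.2 (by simpa using hxj)]
            simp
        · intro x hx y hy hxy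
          have h1 : onesF j \ {x} = onesF j \ {y} := by
            have := congrArg onesF hxy
            simpa using this
          simp only [Finset.mem_sdiff, mem_onesF] at hx hy
          by_contra hne
          have hyy : y ∈ onesF j \ {x} := by
            simp only [Finset.mem_sdiff, mem_onesF, Finset.mem_singleton]
            exact ⟨hy.1, Ne.symm hne⟩
          rw [h1] at hyy
          simp at hyy
        · intro k hk
          simp only [hS, Finset.mem_filter] at hk
          obtain ⟨-, ⟨hik, hcik⟩, ⟨hkj, hcjk⟩⟩ := hk
          obtain ⟨x, hx⟩ := Finset.card_eq_one.1 hcjk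
          have hxmem : x ∈ onesF j \ onesF k := by rw [hx]; simp
          simp only [Finset.mem_sdiff] at hxmem
          refine ⟨x, ?_, ?_⟩
          · simp only [Finset.mem_sdiff]
            exact ⟨hxmem.1, fun hxi => hxmem.2 (hik hxi)⟩
          · apply eq_of_onesF_eq
            rw [onesF_ofOnes, ← hx, Finset.sdiff_sdiff_self_left, Finset.inter_comm,
              Finset.inter_eq_left.2 hkj]
      · rw [if_neg hc, Finset.card_eq_zero, Finset.filter_eq_empty_iff]
        rintro k - ⟨⟨hik, hcik⟩, ⟨hkj, hcjk⟩⟩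
        apply hc
        constructor
        · exact hik.trans hkj
        · have hsplit : onesF j \ onesF i = (onesF k \ onesF i) ∪ (onesF j \ onesF k) := by
            ext l
            simp only [Finset.mem_sdiff, Finset.mem_union]
            constructor
            · rintro ⟨hlj, hli⟩
              by_cases hlk : l ∈ onesF k
              · exact Or.inl ⟨hlk, hli⟩
              · exact Or.inr ⟨hlj, hlk⟩
            · rintro (⟨hlk, hli⟩ | ⟨hlj, hlk⟩)
              · exact ⟨hkj hlk, hli⟩
              · exact ⟨hlj, fun h => hlk (hik h)⟩
          rw [hsplit, Finset.card_union_of_disjoint, hcik, hcjk]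
          rw [Finset.disjoint_left]
          intro l hl hl'
          simp only [Finset.mem_sdiff] at hl hl'
          exact hl'.2 hl.1
    rw [hcard]
    by_cases hc : onesF i ⊆ onesF j ∧ (onesF j \ onesF i).card = a + 1
    · rw [if_pos hc, if_pos hc, Nat.factorial_succ]
      push_cast
      ring
    · rw [if_neg hc, if_neg hc]
      simp

lemma ent_F (i j : Fin r → Fin 2) : ent r (Fop r) i j = ent r (Eop r) j i := by
  rw [Fop, Eop, dAct, dAct, ent_toLin', ent_toLin']
  show (∑ k, if ∀ l, l ≠ k → i l = j l then Matrix.single 1 0 1 (i k) (j k) else 0)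
    = (∑ k, if ∀ l, l ≠ k → j l = i l then Matrix.single 0 1 1 (j k) (i k) else 0)
  refine Finset.sum_congr rfl fun k _ => ?_
  refine if_congr ⟨fun h l hl => (h l hl).symm, fun h l hl => (h l hl).symm⟩ ?_ rfl
  rw [Matrix.single, Matrix.single]
  simp only [Matrix.of_apply]
  exact if_congr and_comm rfl rfl

lemma ent_Fpow (a : ℕ) (i j : Fin r → Fin 2) :
    ent r (Fop r ^ a) i j
      = if onesF j ⊆ onesF i ∧ (onesF i \ onesF j).card = a then (a.factorial : ℚ) else 0 := by
  have : ent r (Fop r) = (ent r (Eop r)).transpose := by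
    ext i j; rw [Matrix.transpose_apply, ent_F]
  rw [map_pow, this, ← Matrix.transpose_pow, Matrix.transpose_apply, ← map_pow, ent_Epow]

lemma ent_divE (a : ℕ) (i j : Fin r → Fin 2) :
    ent r (divPow r (Eop r) a) i j
      = if onesF i ⊆ onesF j ∧ (onesF j \ onesF i).card = a then 1 else 0 := by
  rw [divPow, map_smul, Matrix.smul_apply, ent_Epow]
  have : (a.factorial : ℚ) ≠ 0 := Nat.cast_ne_zero.2 (Nat.factorial_ne_zero a)
  split_ifs <;> simp [this]

lemma ent_divF (a : ℕ) (i j : Fin r → Fin 2) :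
    ent r (divPow r (Fop r) a) i j
      = if onesF j ⊆ onesF i ∧ (onesF i \ onesF j).card = a then 1 else 0 := by
  rw [divPow, map_smul, Matrix.smul_apply, ent_Fpow]
  have : (a.factorial : ℚ) ≠ 0 := Nat.cast_ne_zero.2 (Nat.factorial_ne_zero a)
  split_ifs <;> simp [this]

lemma ent_dActDiag (u : Fin 2) :
    ent r (dAct r (Matrix.single u u 1)) = Matrix.diagonal (fun j => (wt r j u : ℚ)) := by
  rw [dAct, ent_toLin']
  ext i j
  show (∑ k, if ∀ l, l ≠ k → i l = j l then Matrix.single u u 1 (i k) (j k) else 0) = _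
  rw [Matrix.diagonal_apply]
  by_cases hij : i = j
  · subst hij
    rw [if_pos rfl]
    have hterm : ∀ k : Fin r, (if ∀ l, l ≠ k → i l = i l
        then Matrix.single u u 1 (i k) (i k) else 0) = if i k = u then (1:ℚ) else 0 := by
      intro k
      rw [if_pos (fun _ _ => rfl), Matrix.single]
      simp only [Matrix.of_apply, and_self]
      exact if_congr eq_comm rfl rfl
    rw [Finset.sum_congr rfl fun k _ => hterm k, Finset.sum_boole]
    simp [wt]
  · rw [if_neg hij]
    apply Finset.sum_eq_zero
    intro k _
    by_cases h : ∀ l, l ≠ k → i l = j l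
    · rw [if_pos h, Matrix.single]
      simp only [Matrix.of_apply]
      rw [if_neg]
      rintro ⟨h1, h2⟩
      refine hij (funext fun l => ?_)
      rcases eq_or_ne l k with rfl | hl
      · omega
      · exact h l hl
    · rw [if_neg h]

lemma list_prod_eq (b : ℕ) (f : ℕ → ℚ) :
    ((List.range b).map f).prod = ∏ t ∈ Finset.range b, f t := by
  induction b with
  | zero => simp
  | succ b ih =>
    rw [List.range_succ, List.map_append, List.prod_append, Finset.prod_range_succ, ih]
    simp

lemma prod_range_cast (n b : ℕ) :
    ∏ t ∈ Finset.range b, ((n : ℚ) - t) = (n.descFactorial b : ℚ) := by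
  induction b with
  | zero => simp
  | succ b ih =>
    rw [Finset.prod_range_succ, ih, Nat.descFactorial_succ]
    by_cases h : b ≤ n
    · push_cast [Nat.cast_sub h]
      ring
    · rw [Nat.descFactorial_eq_zero_iff_lt.2 (by omega)]
      push_cast
      ring

lemma diag_list_prod (l : List ℕ) (g : ℕ → (Fin r → Fin 2) → ℚ) :
    ((l.map fun t => Matrix.diagonal (g t)).prod : Matrix (Fin r → Fin 2) (Fin r → Fin 2) ℚ)
      = Matrix.diagonal (fun j => (l.map fun t => g t j).prod) := by
  induction l with
  | nil => simp
  | cons t ts ih =>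
    simp only [List.map_cons, List.prod_cons, ih, Matrix.diagonal_mul_diagonal]

lemma coe_list_range (b : ℕ) : (↑(List.range b) : List ℚ) = (List.range b).map (Nat.cast) := by
  show (List.range b).flatMap (fun a : ℕ => [(a:ℚ)]) = _
  induction List.range b with
  | nil => rfl
  | cons x xs ih => simp_all

lemma ent_binom (u : Fin 2) (b : ℕ) :
    ent r (binomOp r (dAct r (Matrix.single u u 1)) b)
      = Matrix.diagonal (fun j => ((wt r j u).choose b : ℚ)) := by
  rw [binomOp, map_smul, map_list_prod, coe_list_range, List.map_map, List.map_map]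
  have hmap : (List.range b).map (((ent r) ∘ fun t => dAct r (Matrix.single u u 1)
        - t • 1) ∘ (Nat.cast : ℕ → ℚ))
      = (List.range b).map fun t : ℕ => Matrix.diagonal (fun j => (wt r j u : ℚ) - t) := by
    apply List.map_congr_left
    intro t _
    ext i j
    simp only [Function.comp_apply, map_sub, map_smul, map_one, ent_dActDiag,
      Matrix.sub_apply, Matrix.smul_apply, Matrix.diagonal_apply, Matrix.one_apply]
    split_ifs <;> simp
  rw [hmap, diag_list_prod]
  ext i j
  rw [Matrix.smul_apply, Matrix.diagonal_apply, Matrix.diagonal_apply]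
  by_cases hij : i = j
  · rw [if_pos hij, if_pos hij, list_prod_eq, prod_range_cast,
      Nat.descFactorial_eq_factorial_mul_choose]
    have : (b.factorial : ℚ) ≠ 0 := Nat.cast_ne_zero.2 (Nat.factorial_ne_zero b)
    push_cast
    simp only [smul_eq_mul]
    field_simp
  · rw [if_neg hij, if_neg hij, smul_zero]

/-! ### Equivariance -/

def IsEquivar (A : Matrix (Fin r → Fin 2) (Fin r → Fin 2) ℚ) : Prop :=
  ∀ (σ : Equiv.Perm (Fin r)) (i j : Fin r → Fin 2), A (i ∘ σ) (j ∘ σ) = A i j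

lemma isEquivar_mul {A B : Matrix (Fin r → Fin 2) (Fin r → Fin 2) ℚ}
    (hA : IsEquivar A) (hB : IsEquivar B) : IsEquivar (A * B) := by
  intro σ i j
  rw [Matrix.mul_apply, Matrix.mul_apply]
  apply Fintype.sum_equiv (Equiv.arrowCongr σ (Equiv.refl (Fin 2)))
  intro k
  have he : (Equiv.arrowCongr σ (Equiv.refl (Fin 2))) k = k ∘ ⇑σ.symm := by
    funext x
    simp [Equiv.arrowCongr]
  rw [he]
  have h1 : (k ∘ ⇑σ.symm) ∘ ⇑σ = k := funext fun x => by simp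
  rw [← hA σ i (k ∘ ⇑σ.symm), ← hB σ (k ∘ ⇑σ.symm) j, h1]

lemma isEquivar_one : IsEquivar (1 : Matrix (Fin r → Fin 2) (Fin r → Fin 2) ℚ) := by
  intro σ i j
  rw [Matrix.one_apply, Matrix.one_apply]
  refine if_congr ⟨fun h => ?_, fun h => by rw [h]⟩ rfl rfl
  funext x
  have := congrFun h (σ.symm x)
  simpa using this

lemma onesF_comp_subset (i j : Fin r → Fin 2) (σ : Equiv.Perm (Fin r)) :
    onesF (i ∘ σ) ⊆ onesF (j ∘ σ) ↔ onesF i ⊆ onesF j := by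
  rw [onesF_comp, onesF_comp]
  exact Finset.image_subset_image_iff (Equiv.injective _)

lemma onesF_comp_sdiff_card (i j : Fin r → Fin 2) (σ : Equiv.Perm (Fin r)) :
    (onesF (j ∘ σ) \ onesF (i ∘ σ)).card = (onesF j \ onesF i).card := by
  rw [onesF_comp, onesF_comp, ← Finset.image_sdiff _ _ (Equiv.injective _)]
  exact Finset.card_image_of_injective _ (Equiv.injective _)

lemma ent_placePerm (σ : Equiv.Perm (Fin r)) :
    ent r (placePerm r σ) = Matrix.of fun i j => if i ∘ σ = j then (1:ℚ) else 0 := by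
  ext i j
  rw [ent_apply]
  rfl

lemma sum_mul_indicator (f : (Fin r → Fin 2) → ℚ) (a : Fin r → Fin 2) :
    ∑ k, f k * (if k = a then (1:ℚ) else 0) = f a := by
  rw [Finset.sum_congr rfl fun k _ => (by split_ifs with h <;> simp [h] :
    f k * (if k = a then (1:ℚ) else 0) = if k = a then f k else 0)]
  rw [Finset.sum_ite_eq' Finset.univ a f]
  simp

lemma indicator_mul_sum (f : (Fin r → Fin 2) → ℚ) (a : Fin r → Fin 2) :
    ∑ k, (if a = k then (1:ℚ) else 0) * f k = f a := by
  rw [Finset.sum_congr rfl fun k _ => (by split_ifs with h <;> simp [h] :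
    (if a = k then (1:ℚ) else 0) * f k = if a = k then f k else 0)]
  rw [Finset.sum_ite_eq Finset.univ a f]
  simp

lemma ent_comp_placePerm (x : Module.End ℚ (TSpQ r)) (σ : Equiv.Perm (Fin r))
    (i j : Fin r → Fin 2) :
    ent r (x ∘ₗ placePerm r σ) i j = ent r x i (j ∘ ⇑σ.symm) := by
  rw [show x ∘ₗ placePerm r σ = x * placePerm r σ from rfl, map_mul, Matrix.mul_apply]
  have hcond : ∀ k : Fin r → Fin 2, (k ∘ ⇑σ = j) ↔ k = j ∘ ⇑σ.symm := by
    intro k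
    constructor
    · intro h
      funext x'
      have := congrFun h (σ.symm x')
      simpa using this
    · rintro rfl
      funext x'
      simp
  have hterm : ∀ k : Fin r → Fin 2, ent r x i k * ent r (placePerm r σ) k j
      = ent r x i k * (if k = j ∘ ⇑σ.symm then 1 else 0) := by
    intro k
    rw [ent_placePerm]
    simp only [Matrix.of_apply]
    exact congrArg (ent r x i k * ·) (if_congr (hcond k) rfl rfl)
  rw [Finset.sum_congr rfl fun k _ => hterm k]
  exact sum_mul_indicator _ _

lemma ent_placePerm_comp (x : Module.End ℚ (TSpQ r)) (σ : Equiv.Perm (Fin r))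
    (i j : Fin r → Fin 2) :
    ent r (placePerm r σ ∘ₗ x) i j = ent r x (i ∘ ⇑σ) j := by
  rw [show placePerm r σ ∘ₗ x = placePerm r σ * x from rfl, map_mul, Matrix.mul_apply]
  have hterm : ∀ k : Fin r → Fin 2, ent r (placePerm r σ) i k * ent r x k j
      = (if i ∘ ⇑σ = k then 1 else 0) * ent r x k j := by
    intro k
    rw [ent_placePerm]
    rfl
  rw [Finset.sum_congr rfl fun k _ => hterm k]
  exact indicator_mul_sum (fun k => ent r x k j) (i ∘ ⇑σ)

lemma commute_iff_isEquivar (x : Module.End ℚ (TSpQ r)) :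
    (∀ σ, x ∘ₗ placePerm r σ = placePerm r σ ∘ₗ x) ↔ IsEquivar (ent r x) := by
  constructor
  · intro h σ i j
    have h1 := congrFun (congrFun (congrArg (ent r) (h σ)) i) (j ∘ ⇑σ)
    rw [ent_comp_placePerm, ent_placePerm_comp] at h1
    have h2 : (j ∘ ⇑σ) ∘ ⇑σ.symm = j := funext fun x' => by simp
    rw [h2] at h1
    exact h1.symm
  · intro h σ
    apply (ent r).injective
    ext i j
    rw [ent_comp_placePerm, ent_placePerm_comp]
    have h2 : (j ∘ ⇑σ.symm) ∘ ⇑σ = j := funext fun x' => by simp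
    have := h σ i (j ∘ ⇑σ.symm)
    rw [h2] at this
    exact this.symm

lemma ent_trunc {lam mu : Fin 2 → ℕ} {x : Module.End ℚ (TSpQ r)}
    (h : proj r lam ∘ₗ x ∘ₗ proj r mu = x) {i j : Fin r → Fin 2}
    (hij : ¬(wt r i = lam ∧ wt r j = mu)) : ent r x i j = 0 := by
  have hx : ent r x = ent r (proj r lam) * (ent r x * ent r (proj r mu)) := by
    conv_lhs => rw [← h]
    rw [show proj r lam ∘ₗ x ∘ₗ proj r mu = proj r lam * (x * proj r mu) from rfl,
      map_mul, map_mul]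
  rw [hx, ent_proj, ent_proj, Matrix.diagonal_mul, Matrix.mul_diagonal]
  by_cases h1 : wt r i = lam
  · rw [if_neg (fun h2 => hij ⟨h1, h2⟩)]
    ring
  · rw [if_neg h1]
    ring

/-! ### The integral lattice of equivariant integer matrices -/

def intLat (r : ℕ) : Subalgebra ℤ (Module.End ℚ (TSpQ r)) where
  carrier := {x | IsEquivar (ent r x) ∧ ∀ i j, ent r x i j ∈ (algebraMap ℤ ℚ).range}
  mul_mem' := by
    rintro x y ⟨hx1, hx2⟩ ⟨hy1, hy2⟩
    refine ⟨by rw [map_mul]; exact isEquivar_mul hx1 hy1, fun i j => ?_⟩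
    rw [map_mul, Matrix.mul_apply]
    exact sum_mem fun k _ => mul_mem (hx2 i k) (hy2 k j)
  one_mem' := by
    refine ⟨by rw [map_one]; exact isEquivar_one, fun i j => ?_⟩
    rw [map_one, Matrix.one_apply]
    split_ifs
    · exact ⟨1, by simp⟩
    · exact ⟨0, by simp⟩
  add_mem' := by
    rintro x y ⟨hx1, hx2⟩ ⟨hy1, hy2⟩
    refine ⟨fun σ i j => ?_, fun i j => ?_⟩
    · rw [map_add, Matrix.add_apply, Matrix.add_apply, hx1 σ i j, hy1 σ i j]
    · rw [map_add, Matrix.add_apply]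
      exact add_mem (hx2 i j) (hy2 i j)
  zero_mem' := by
    refine ⟨fun σ i j => ?_, fun i j => ?_⟩
    · rw [map_zero]
      rfl
    · rw [map_zero]
      exact ⟨0, by simp⟩
  algebraMap_mem' := by
    intro n
    have hent : ent r ((algebraMap ℤ (Module.End ℚ (TSpQ r))) n)
        = n • (1 : Matrix (Fin r → Fin 2) (Fin r → Fin 2) ℚ) := by
      rw [Algebra.algebraMap_eq_smul_one, map_zsmul, map_one]
    refine ⟨fun σ i j => ?_, fun i j => ?_⟩
    · rw [hent, Matrix.smul_apply, Matrix.smul_apply, isEquivar_one σ i j]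
    · rw [hent, Matrix.smul_apply, Matrix.one_apply]
      split_ifs
      · exact ⟨n, by simp⟩
      · exact ⟨0, by simp⟩

lemma SZ_le_intLat : SZ r ≤ intLat r := by
  apply Algebra.adjoin_le
  rintro x (⟨a, (rfl | rfl)⟩ | ⟨u, b, rfl⟩)
  · refine ⟨fun σ i j => ?_, fun i j => ?_⟩
    · rw [ent_divE, ent_divE]
      exact if_congr (and_congr (onesF_comp_subset i j σ)
        (by rw [onesF_comp_sdiff_card])) rfl rfl
    · rw [ent_divE]
      split_ifs
      · exact ⟨1, by simp⟩
      · exact ⟨0, by simp⟩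
  · refine ⟨fun σ i j => ?_, fun i j => ?_⟩
    · rw [ent_divF, ent_divF]
      exact if_congr (and_congr (onesF_comp_subset j i σ)
        (by rw [onesF_comp_sdiff_card])) rfl rfl
    · rw [ent_divF]
      split_ifs
      · exact ⟨1, by simp⟩
      · exact ⟨0, by simp⟩
  · refine ⟨fun σ i j => ?_, fun i j => ?_⟩
    · rw [ent_binom, Matrix.diagonal_apply, Matrix.diagonal_apply]
      have hw : wt r (i ∘ ⇑σ) u = wt r i u := congrFun (wt_comp r i σ) u
      have hiff : (i ∘ ⇑σ = j ∘ ⇑σ) ↔ i = j := by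
        constructor
        · intro h
          funext x'
          have := congrFun h (σ.symm x')
          simpa using this
        · rintro rfl; rfl
      rw [hw]
      exact if_congr hiff rfl rfl
    · rw [ent_binom, Matrix.diagonal_apply]
      split_ifs
      · exact ⟨(wt r i u).choose b, by simp⟩
      · exact ⟨0, by simp⟩

/-! ### Weights -/

lemma wt_apply_one (i : Fin r → Fin 2) : wt r i 1 = (onesF i).card := rfl

lemma wt_add (i : Fin r → Fin 2) : wt r i 0 + wt r i 1 = r := by
  have h1 : (Finset.univ.filter fun k : Fin r => ¬ i k = 0)
      = Finset.univ.filter fun k => i k = 1 :=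
    Finset.filter_congr fun k _ => ⟨fun h => by omega, fun h => by omega⟩
  have h2 := Finset.card_filter_add_card_filter_not
    (s := (Finset.univ : Finset (Fin r))) (p := fun k : Fin r => i k = 0)
  rw [h1] at h2
  simpa [wt] using h2

lemma wt_eq_iff (hlam : lam 0 + lam 1 = r) (i : Fin r → Fin 2) :
    wt r i = lam ↔ (onesF i).card = lam 1 := by
  constructor
  · intro h
    rw [← wt_apply_one, h]
  · intro h
    have h0 := wt_add i
    funext u
    rcases (by omega : u = 0 ∨ u = 1) with rfl | rfl
    · show wt r i 0 = lam 0
      have : wt r i 1 = lam 1 := by rw [wt_apply_one, h]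
      omega
    · show wt r i 1 = lam 1
      rw [wt_apply_one, h]

/-! ### Orbits -/

lemma exists_perm {i j i' j' : Fin r → Fin 2}
    (h : ∀ u v : Fin 2, (Finset.univ.filter fun l => i l = u ∧ j l = v).card
      = (Finset.univ.filter fun l => i' l = u ∧ j' l = v).card) :
    ∃ σ : Equiv.Perm (Fin r), i ∘ σ = i' ∧ j ∘ σ = j' := by
  set g : Fin r → Fin 2 × Fin 2 := fun l => (i' l, j' l) with hg
  set f : Fin r → Fin 2 × Fin 2 := fun l => (i l, j l) with hf
  have hcard : ∀ v : Fin 2 × Fin 2, Fintype.card {l // g l = v} = Fintype.card {l // f l = v} := by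
    intro v
    rw [Fintype.card_subtype, Fintype.card_subtype]
    have e1 : (Finset.univ.filter fun l => g l = v)
        = (Finset.univ.filter fun l => i' l = v.1 ∧ j' l = v.2) :=
      Finset.filter_congr fun l _ => by rw [hg, Prod.ext_iff]
    have e2 : (Finset.univ.filter fun l => f l = v)
        = (Finset.univ.filter fun l => i l = v.1 ∧ j l = v.2) :=
      Finset.filter_congr fun l _ => by rw [hf, Prod.ext_iff]
    rw [e1, e2, h v.1 v.2]
  let φ : ∀ v : Fin 2 × Fin 2, {l // g l = v} ≃ {l // f l = v} :=
    fun v => Fintype.equivOfCardEq (hcard v)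
  let σ : Equiv.Perm (Fin r) :=
    ((Equiv.sigmaFiberEquiv g).symm.trans (Equiv.sigmaCongrRight φ)).trans
      (Equiv.sigmaFiberEquiv f)
  have key : ∀ l, f (σ l) = g l := by
    intro l
    have hσ : σ l = ((φ ((Equiv.sigmaFiberEquiv g).symm l).1)
        ((Equiv.sigmaFiberEquiv g).symm l).2 : {x // f x = ((Equiv.sigmaFiberEquiv g).symm l).1}).val := rfl
    have hprop := ((φ ((Equiv.sigmaFiberEquiv g).symm l).1)
        ((Equiv.sigmaFiberEquiv g).symm l).2).property
    rw [hσ, hprop]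
    have happ : (Equiv.sigmaFiberEquiv g) ((Equiv.sigmaFiberEquiv g).symm l) = l :=
      Equiv.apply_symm_apply _ _
    have hval : (((Equiv.sigmaFiberEquiv g).symm l).2 : Fin r) = l := happ
    have := ((Equiv.sigmaFiberEquiv g).symm l).2.property
    rw [hval] at this
    exact this
  refine ⟨σ, funext fun l => ?_, funext fun l => ?_⟩
  · have := key l
    rw [hf, hg, Prod.ext_iff] at this
    exact this.1
  · have := key l
    rw [hf, hg, Prod.ext_iff] at this
    exact this.2

section Lam

variable {lam : Fin 2 → ℕ}

lemma sdiff_card_symm {i j : Fin r → Fin 2}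
    (hc : (onesF i).card = (onesF j).card) :
    (onesF i \ onesF j).card = (onesF j \ onesF i).card := by
  have h1 := Finset.card_sdiff_add_card_inter (onesF i) (onesF j)
  have h2 := Finset.card_sdiff_add_card_inter (onesF j) (onesF i)
  rw [Finset.inter_comm] at h2
  omega

lemma count_uv (hlam : lam 0 + lam 1 = r) {i j : Fin r → Fin 2}
    (hi : wt r i = lam) (hj : wt r j = lam) (u v : Fin 2) :
    (Finset.univ.filter fun l => i l = u ∧ j l = v).card
      = if u = 1 then (if v = 1 then lam 1 - (onesF j \ onesF i).card
          else (onesF j \ onesF i).card)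
        else (if v = 1 then (onesF j \ onesF i).card
          else lam 0 - (onesF j \ onesF i).card) := by
  have hci : (onesF i).card = lam 1 := (wt_eq_iff hlam i).1 hi
  have hcj : (onesF j).card = lam 1 := (wt_eq_iff hlam j).1 hj
  have h1 := Finset.card_sdiff_add_card_inter (onesF j) (onesF i)
  rw [Finset.inter_comm] at h1
  have h2 := Finset.card_sdiff_add_card_inter (onesF i) (onesF j)
  have h3 := Finset.card_union_add_card_inter (onesF i) (onesF j)
  have h4 : (onesF i ∪ onesF j).card ≤ r := le_trans (Finset.card_le_univ _) (by simp)
  rcases (by omega : u = 0 ∨ u = 1) with rfl | rfl <;>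
    rcases (by omega : v = 0 ∨ v = 1) with rfl | rfl
  · have e : (Finset.univ.filter fun l => i l = 0 ∧ j l = 0)
        = (onesF i ∪ onesF j)ᶜ := by
      ext l
      simp only [Finset.mem_filter, Finset.mem_univ, true_and, Finset.mem_compl,
        Finset.mem_union, mem_onesF]
      omega
    rw [e, Finset.card_compl]
    simp only [Fintype.card_fin]
    rw [if_neg (by omega : ¬(0:Fin 2) = 1), if_neg (by omega : ¬(0:Fin 2) = 1)]
    omega
  · have e : (Finset.univ.filter fun l => i l = 0 ∧ j l = 1)
        = onesF j \ onesF i := by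
      ext l
      simp only [Finset.mem_filter, Finset.mem_univ, true_and, Finset.mem_sdiff, mem_onesF]
      omega
    rw [e, if_neg (by omega : ¬(0:Fin 2) = 1), if_pos rfl]
  · have e : (Finset.univ.filter fun l => i l = 1 ∧ j l = 0)
        = onesF i \ onesF j := by
      ext l
      simp only [Finset.mem_filter, Finset.mem_univ, true_and, Finset.mem_sdiff, mem_onesF]
      omega
    rw [e, if_pos rfl, if_neg (by omega : ¬(0:Fin 2) = 1)]
    omega
  · have e : (Finset.univ.filter fun l => i l = 1 ∧ j l = 1)
        = onesF i ∩ onesF j := by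
      ext l
      simp only [Finset.mem_filter, Finset.mem_univ, true_and, Finset.mem_inter, mem_onesF]
    rw [e, if_pos rfl, if_pos rfl]
    omega

lemma entry_const (hlam : lam 0 + lam 1 = r) {x : Module.End ℚ (TSpQ r)}
    (hx : IsEquivar (ent r x)) {i j i' j' : Fin r → Fin 2}
    (hi : wt r i = lam) (hj : wt r j = lam) (hi' : wt r i' = lam) (hj' : wt r j' = lam)
    (hd : (onesF j \ onesF i).card = (onesF j' \ onesF i').card) :
    ent r x i j = ent r x i' j' := by
  obtain ⟨σ, h1, h2⟩ := exists_perm (i := i) (j := j) (i' := i') (j' := j')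
    (fun u v => by rw [count_uv hlam hi hj u v, count_uv hlam hi' hj' u v, hd])
  rw [← h1, ← h2]
  exact (hx σ i j).symm

lemma dist_le (hlam : lam 0 + lam 1 = r) {i j : Fin r → Fin 2}
    (hi : wt r i = lam) (hj : wt r j = lam) :
    (onesF j \ onesF i).card ≤ min (lam 0) (lam 1) := by
  have hci : (onesF i).card = lam 1 := (wt_eq_iff hlam i).1 hi
  have hcj : (onesF j).card = lam 1 := (wt_eq_iff hlam j).1 hj
  have h1 : (onesF j \ onesF i).card ≤ lam 1 := by
    calc (onesF j \ onesF i).card ≤ (onesF j).card :=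
          Finset.card_le_card Finset.sdiff_subset
      _ = lam 1 := hcj
  have h2 : onesF j \ onesF i ⊆ (onesF i)ᶜ := by
    intro l hl
    simp only [Finset.mem_sdiff] at hl
    simp [hl.2]
  have h3 := Finset.card_le_card h2
  rw [Finset.card_compl, hci] at h3
  simp only [Fintype.card_fin] at h3
  have h4 : lam 1 ≤ r := by
    have := Finset.card_le_univ (onesF i)
    simp only [Finset.card_univ, Fintype.card_fin] at this
    omega
  omega

end Lam

/-! ### The ξ operators -/

def xiM (r : ℕ) (lam : Fin 2 → ℕ) (d : ℕ) : Matrix (Fin r → Fin 2) (Fin r → Fin 2) ℚ :=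
  Matrix.of fun i j =>
    if wt r i = lam ∧ wt r j = lam ∧ (onesF j \ onesF i).card = d then 1 else 0

noncomputable def xi (r : ℕ) (lam : Fin 2 → ℕ) (d : ℕ) : Module.End ℚ (TSpQ r) :=
  (ent r).symm (xiM r lam d)

@[simp] lemma ent_xi (lam : Fin 2 → ℕ) (d : ℕ) : ent r (xi r lam d) = xiM r lam d :=
  AlgEquiv.apply_symm_apply _ _

lemma isEquivar_xiM (lam : Fin 2 → ℕ) (d : ℕ) : IsEquivar (xiM r lam d) := by
  intro σ i j
  show (if _ then (1:ℚ) else 0) = (if _ then (1:ℚ) else 0)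
  refine if_congr (and_congr ?_ (and_congr ?_ ?_)) rfl rfl
  · rw [wt_comp]
  · rw [wt_comp]
  · rw [onesF_comp_sdiff_card]

/-! ### Representative pairs -/

def iRep (r : ℕ) (lam : Fin 2 → ℕ) : Fin r → Fin 2 :=
  ofOnes (Finset.univ.filter fun l : Fin r => lam 0 ≤ l.val)

def jRep (r : ℕ) (lam : Fin 2 → ℕ) (d : ℕ) : Fin r → Fin 2 :=
  ofOnes (Finset.univ.filter fun l : Fin r =>
    lam 0 - d ≤ l.val ∧ l.val < lam 0 - d + lam 1)

lemma card_val_filter (p : ℕ → Prop) [DecidablePred p] :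
    (Finset.univ.filter fun l : Fin r => p l.val).card = ((Finset.range r).filter p).card := by
  apply Finset.card_bij (fun l _ => l.val)
  · intro l hl
    simp only [Finset.mem_filter, Finset.mem_range] at *
    exact ⟨l.isLt, hl.2⟩
  · intro a _ b _ h
    exact Fin.val_injective h
  · intro n hn
    simp only [Finset.mem_filter, Finset.mem_range] at hn
    exact ⟨⟨n, hn.1⟩, by simp [hn.2], rfl⟩

lemma wt_iRep {lam : Fin 2 → ℕ} (hlam : lam 0 + lam 1 = r) : wt r (iRep r lam) = lam := by
  rw [wt_eq_iff hlam, iRep, onesF_ofOnes, card_val_filter (p := fun n => lam 0 ≤ n)]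
  have : (Finset.range r).filter (fun n => lam 0 ≤ n) = Finset.Ico (lam 0) r := by
    ext n
    simp only [Finset.mem_filter, Finset.mem_range, Finset.mem_Ico]
    omega
  rw [this, Nat.card_Ico]
  omega

lemma wt_jRep {lam : Fin 2 → ℕ} (hlam : lam 0 + lam 1 = r) {d : ℕ}
    (hd : d ≤ min (lam 0) (lam 1)) : wt r (jRep r lam d) = lam := by
  have hd0 : d ≤ lam 0 := le_trans hd (min_le_left _ _)
  have hd1 : d ≤ lam 1 := le_trans hd (min_le_right _ _)
  rw [wt_eq_iff hlam, jRep, onesF_ofOnes,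
    card_val_filter (p := fun n => lam 0 - d ≤ n ∧ n < lam 0 - d + lam 1)]
  have : (Finset.range r).filter (fun n => lam 0 - d ≤ n ∧ n < lam 0 - d + lam 1)
      = Finset.Ico (lam 0 - d) (lam 0 - d + lam 1) := by
    ext n
    simp only [Finset.mem_filter, Finset.mem_range, Finset.mem_Ico]
    omega
  rw [this, Nat.card_Ico]
  omega

lemma dist_rep {lam : Fin 2 → ℕ} (hlam : lam 0 + lam 1 = r) {d : ℕ}
    (hd : d ≤ min (lam 0) (lam 1)) :
    (onesF (jRep r lam d) \ onesF (iRep r lam)).card = d := by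
  have hd0 : d ≤ lam 0 := le_trans hd (min_le_left _ _)
  have hd1 : d ≤ lam 1 := le_trans hd (min_le_right _ _)
  rw [iRep, jRep, onesF_ofOnes, onesF_ofOnes]
  have e : (Finset.univ.filter fun l : Fin r =>
        lam 0 - d ≤ l.val ∧ l.val < lam 0 - d + lam 1)
      \ (Finset.univ.filter fun l : Fin r => lam 0 ≤ l.val)
      = Finset.univ.filter fun l : Fin r => lam 0 - d ≤ l.val ∧ l.val < lam 0 := by
    ext l
    simp only [Finset.mem_sdiff, Finset.mem_filter, Finset.mem_univ, true_and, not_le]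
    omega
  rw [e, card_val_filter (p := fun n => lam 0 - d ≤ n ∧ n < lam 0)]
  have : (Finset.range r).filter (fun n => lam 0 - d ≤ n ∧ n < lam 0)
      = Finset.Ico (lam 0 - d) (lam 0) := by
    ext n
    simp only [Finset.mem_filter, Finset.mem_range, Finset.mem_Ico]
    omega
  rw [this, Nat.card_Ico]
  omega

/-! ### Decomposition along representatives -/

lemma rep_decomp {lam : Fin 2 → ℕ} (hlam : lam 0 + lam 1 = r) {y : Module.End ℚ (TSpQ r)}
    (h1 : IsEquivar (ent r y))
    (h2 : ∀ i j, ¬(wt r i = lam ∧ wt r j = lam) → ent r y i j = 0) :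
    y = ∑ e : Fin (min (lam 0) (lam 1) + 1),
      ent r y (iRep r lam) (jRep r lam e) • xi r lam e := by
  apply (ent r).injective
  rw [map_sum]
  ext i j
  rw [Matrix.sum_apply]
  have hterm : ∀ e : Fin (min (lam 0) (lam 1) + 1),
      (ent r (ent r y (iRep r lam) (jRep r lam e) • xi r lam e)) i j
        = ent r y (iRep r lam) (jRep r lam e) * xiM r lam e i j := by
    intro e
    rw [map_smul, Matrix.smul_apply, ent_xi]
    rfl
  rw [Finset.sum_congr rfl fun e _ => hterm e]
  by_cases hw : wt r i = lam ∧ wt r j = lam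
  · set d := (onesF j \ onesF i).card with hdd
    have hdm : d ≤ min (lam 0) (lam 1) := dist_le hlam hw.1 hw.2
    have hterm2 : ∀ e : Fin (min (lam 0) (lam 1) + 1),
        ent r y (iRep r lam) (jRep r lam e) * xiM r lam e i j
          = if e = (⟨d, by omega⟩ : Fin (min (lam 0) (lam 1) + 1))
            then ent r y (iRep r lam) (jRep r lam e) else 0 := by
      intro e
      show ent r y (iRep r lam) (jRep r lam e) * (if _ then (1:ℚ) else 0) = _
      have : (wt r i = lam ∧ wt r j = lam ∧ (onesF j \ onesF i).card = (e:ℕ))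
          ↔ e = (⟨d, by omega⟩ : Fin (min (lam 0) (lam 1) + 1)) := by
        constructor
        · rintro ⟨-, -, he⟩
          apply Fin.ext
          simp [← he, hdd]
        · rintro rfl
          exact ⟨hw.1, hw.2, rfl⟩
      rw [if_congr this rfl rfl, mul_ite, mul_one, mul_zero]
    rw [Finset.sum_congr rfl fun e _ => hterm2 e,
      Finset.sum_ite_eq' Finset.univ (⟨d, by omega⟩ : Fin (min (lam 0) (lam 1) + 1))]
    simp only [Finset.mem_univ, if_pos]
    exact entry_const hlam h1 hw.1 hw.2 (wt_iRep hlam) (wt_jRep hlam hdm)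
      (by rw [dist_rep hlam hdm])
  · rw [h2 i j hw]
    apply (Finset.sum_eq_zero fun e _ => ?_).symm
    have : xiM r lam e i j = 0 := by
      rw [xiM, Matrix.of_apply, if_neg]
      rintro ⟨ha, hb, -⟩
      exact hw ⟨ha, hb⟩
    rw [this, mul_zero]

/-! ### The divided-power products -/

noncomputable def Ba (r : ℕ) (lam : Fin 2 → ℕ) (a : ℕ) : Module.End ℚ (TSpQ r) :=
  proj r lam * (divPow r (Fop r) a * divPow r (Eop r) a) * proj r lam

noncomputable def Ba' (r : ℕ) (lam : Fin 2 → ℕ) (a : ℕ) : Module.End ℚ (TSpQ r) :=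
  proj r lam * (divPow r (Eop r) a * divPow r (Fop r) a) * proj r lam

lemma ent_Ba_raw (lam : Fin 2 → ℕ) (a : ℕ) (i j : Fin r → Fin 2) :
    ent r (Ba r lam a) i j = (if wt r i = lam then (1:ℚ) else 0)
      * (((Finset.univ.filter fun k : Fin r → Fin 2 =>
          (onesF k ⊆ onesF i ∧ (onesF i \ onesF k).card = a)
          ∧ (onesF k ⊆ onesF j ∧ (onesF j \ onesF k).card = a)).card : ℚ))
      * (if wt r j = lam then 1 else 0) := by
  rw [Ba, map_mul, map_mul, ent_proj, Matrix.mul_diagonal, Matrix.diagonal_mul, map_mul,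
    Matrix.mul_apply]
  have hterm : ∀ k : Fin r → Fin 2,
      ent r (divPow r (Fop r) a) i k * ent r (divPow r (Eop r) a) k j
        = (if onesF k ⊆ onesF i ∧ (onesF i \ onesF k).card = a then (1:ℚ) else 0)
          * (if onesF k ⊆ onesF j ∧ (onesF j \ onesF k).card = a then (1:ℚ) else 0) := by
    intro k
    rw [ent_divF, ent_divE]
  rw [Finset.sum_congr rfl fun k _ => hterm k, sum_ite_card]
  ring

lemma ent_Ba'_raw (lam : Fin 2 → ℕ) (a : ℕ) (i j : Fin r → Fin 2) :
    ent r (Ba' r lam a) i j = (if wt r i = lam then (1:ℚ) else 0)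
      * (((Finset.univ.filter fun k : Fin r → Fin 2 =>
          (onesF i ⊆ onesF k ∧ (onesF k \ onesF i).card = a)
          ∧ (onesF j ⊆ onesF k ∧ (onesF k \ onesF j).card = a)).card : ℚ))
      * (if wt r j = lam then 1 else 0) := by
  rw [Ba', map_mul, map_mul, ent_proj, Matrix.mul_diagonal, Matrix.diagonal_mul, map_mul,
    Matrix.mul_apply]
  have hterm : ∀ k : Fin r → Fin 2,
      ent r (divPow r (Eop r) a) i k * ent r (divPow r (Fop r) a) k j
        = (if onesF i ⊆ onesF k ∧ (onesF k \ onesF i).card = a then (1:ℚ) else 0)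
          * (if onesF j ⊆ onesF k ∧ (onesF k \ onesF j).card = a then (1:ℚ) else 0) := by
    intro k
    rw [ent_divF, ent_divE]
  rw [Finset.sum_congr rfl fun k _ => hterm k, sum_ite_card]
  ring

lemma ent_Ba {lam : Fin 2 → ℕ} (hlam : lam 0 + lam 1 = r) (a : ℕ) (ha : a ≤ lam 1)
    (i j : Fin r → Fin 2) :
    ent r (Ba r lam a) i j
      = if wt r i = lam ∧ wt r j = lam then
          (if (onesF j \ onesF i).card ≤ a
            then (((lam 1 - (onesF j \ onesF i).card).choose
              (a - (onesF j \ onesF i).card) : ℕ) : ℚ)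
            else 0)
        else 0 := by
  rw [ent_Ba_raw]
  by_cases hw : wt r i = lam ∧ wt r j = lam
  · rw [if_pos hw.1, if_pos hw.2, if_pos hw, one_mul, mul_one]
    have hci : (onesF i).card = lam 1 := (wt_eq_iff hlam i).1 hw.1
    have hcj : (onesF j).card = lam 1 := (wt_eq_iff hlam j).1 hw.2
    set d := (onesF j \ onesF i).card with hdd
    have hd1 : d ≤ lam 1 := by
      calc d ≤ (onesF j).card := Finset.card_le_card Finset.sdiff_subset
        _ = lam 1 := hcj
    have hinter : (onesF i ∩ onesF j).card = lam 1 - d := by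
      have := Finset.card_sdiff_add_card_inter (onesF j) (onesF i)
      rw [Finset.inter_comm] at this
      omega
    have hset : (Finset.univ.filter fun k : Fin r → Fin 2 =>
          (onesF k ⊆ onesF i ∧ (onesF i \ onesF k).card = a)
          ∧ (onesF k ⊆ onesF j ∧ (onesF j \ onesF k).card = a))
        = Finset.univ.filter fun k : Fin r → Fin 2 =>
          onesF k ⊆ onesF i ∩ onesF j ∧ (onesF k).card = lam 1 - a := by
      apply Finset.filter_congr
      intro k _
      constructor
      · rintro ⟨⟨h1, h2⟩, h3, h4⟩
        refine ⟨Finset.subset_inter h1 h3, ?_⟩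
        have := Finset.card_sdiff_of_subset h1
        have hk := Finset.card_le_card h1
        omega
      · rintro ⟨h1, h2⟩
        have hki : onesF k ⊆ onesF i := h1.trans Finset.inter_subset_left
        have hkj : onesF k ⊆ onesF j := h1.trans Finset.inter_subset_right
        refine ⟨⟨hki, ?_⟩, hkj, ?_⟩
        · rw [Finset.card_sdiff_of_subset hki, hci, h2]
          omega
        · rw [Finset.card_sdiff_of_subset hkj, hcj, h2]
          omega
    rw [hset, card_ones_subset, hinter]
    by_cases hda : d ≤ a
    · rw [if_pos hda]
      have he : lam 1 - a = (lam 1 - d) - (a - d) := by omega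
      rw [he, Nat.choose_symm (by omega)]
    · rw [if_neg hda, Nat.choose_eq_zero_of_lt (by omega)]
      simp
  · rw [if_neg hw]
    rcases not_and_or.1 hw with h | h
    · rw [if_neg h]
      ring
    · rw [if_neg h]
      ring

lemma ent_Ba' {lam : Fin 2 → ℕ} (hlam : lam 0 + lam 1 = r) (a : ℕ)
    (i j : Fin r → Fin 2) :
    ent r (Ba' r lam a) i j
      = if wt r i = lam ∧ wt r j = lam then
          (if (onesF j \ onesF i).card ≤ a
            then (((lam 0 - (onesF j \ onesF i).card).choose
              (a - (onesF j \ onesF i).card) : ℕ) : ℚ)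
            else 0)
        else 0 := by
  rw [ent_Ba'_raw]
  by_cases hw : wt r i = lam ∧ wt r j = lam
  · rw [if_pos hw.1, if_pos hw.2, if_pos hw, one_mul, mul_one]
    have hci : (onesF i).card = lam 1 := (wt_eq_iff hlam i).1 hw.1
    have hcj : (onesF j).card = lam 1 := (wt_eq_iff hlam j).1 hw.2
    set d := (onesF j \ onesF i).card with hdd
    have hdm : d ≤ min (lam 0) (lam 1) := dist_le hlam hw.1 hw.2
    have hd0 : d ≤ lam 0 := le_trans hdm (min_le_left _ _)
    have hd1 : d ≤ lam 1 := le_trans hdm (min_le_right _ _)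
    have hinter : (onesF i ∩ onesF j).card = lam 1 - d := by
      have := Finset.card_sdiff_add_card_inter (onesF j) (onesF i)
      rw [Finset.inter_comm] at this
      omega
    have hunion : (onesF i ∪ onesF j).card = lam 1 + d := by
      have := Finset.card_union_add_card_inter (onesF i) (onesF j)
      omega
    have hset : (Finset.univ.filter fun k : Fin r → Fin 2 =>
          (onesF i ⊆ onesF k ∧ (onesF k \ onesF i).card = a)
          ∧ (onesF j ⊆ onesF k ∧ (onesF k \ onesF j).card = a))
        = Finset.univ.filter fun k : Fin r → Fin 2 =>
          onesF i ∪ onesF j ⊆ onesF k ∧ (onesF k).card = lam 1 + a := by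
      apply Finset.filter_congr
      intro k _
      constructor
      · rintro ⟨⟨h1, h2⟩, h3, h4⟩
        refine ⟨Finset.union_subset h1 h3, ?_⟩
        have := Finset.card_sdiff_of_subset h1
        have hk := Finset.card_le_card h1
        omega
      · rintro ⟨h1, h2⟩
        have hik : onesF i ⊆ onesF k := Finset.subset_union_left.trans h1
        have hjk : onesF j ⊆ onesF k := Finset.subset_union_right.trans h1
        refine ⟨⟨hik, ?_⟩, hjk, ?_⟩
        · rw [Finset.card_sdiff_of_subset hik, hci, h2]
          omega
        · rw [Finset.card_sdiff_of_subset hjk, hcj, h2]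
          omega
    rw [hset]
    by_cases hda : d ≤ a
    · rw [if_pos hda, card_ones_supset _ _ (by omega), hunion]
      have e1 : r - (lam 1 + d) = lam 0 - d := by omega
      have e2 : lam 1 + a - (lam 1 + d) = a - d := by omega
      rw [e1, e2]
    · rw [if_neg hda, card_ones_supset_zero _ _ (by omega)]
      simp
  · rw [if_neg hw]
    rcases not_and_or.1 hw with h | h
    · rw [if_neg h]
      ring
    · rw [if_neg h]
      ring

/-! ### Expansion of the divided-power products in the ξ basis -/

def cBn (lam : Fin 2 → ℕ) (a e : ℕ) : ℕ :=
  if e ≤ a then (lam 1 - e).choose (a - e) else 0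

def cBn' (lam : Fin 2 → ℕ) (a e : ℕ) : ℕ :=
  if e ≤ a then (lam 0 - e).choose (a - e) else 0

noncomputable def xifam (r : ℕ) (lam : Fin 2 → ℕ) :
    Fin (min (lam 0) (lam 1) + 1) → Module.End ℚ (TSpQ r) := fun e => xi r lam (e : ℕ)

noncomputable def Bfam (r : ℕ) (lam : Fin 2 → ℕ) :
    Fin (min (lam 0) (lam 1) + 1) → Module.End ℚ (TSpQ r) := fun a => Ba r lam (a : ℕ)

noncomputable def Bfam' (r : ℕ) (lam : Fin 2 → ℕ) :
    Fin (min (lam 0) (lam 1) + 1) → Module.End ℚ (TSpQ r) := fun a => Ba' r lam (a : ℕ)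

lemma cBn_cast (lam : Fin 2 → ℕ) (a e : ℕ) :
    ((cBn lam a e : ℕ) : ℚ) = if e ≤ a then (((lam 1 - e).choose (a - e) : ℕ) : ℚ) else 0 := by
  rw [cBn, apply_ite (Nat.cast : ℕ → ℚ), Nat.cast_zero]

lemma cBn'_cast (lam : Fin 2 → ℕ) (a e : ℕ) :
    ((cBn' lam a e : ℕ) : ℚ) = if e ≤ a then (((lam 0 - e).choose (a - e) : ℕ) : ℚ) else 0 := by
  rw [cBn', apply_ite (Nat.cast : ℕ → ℚ), Nat.cast_zero]

lemma isEquivar_Ba {lam : Fin 2 → ℕ} (hlam : lam 0 + lam 1 = r) (a : ℕ) (ha : a ≤ lam 1) :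
    IsEquivar (ent r (Ba r lam a)) := by
  intro σ i j
  rw [ent_Ba hlam a ha, ent_Ba hlam a ha]
  refine if_congr (and_congr (by rw [wt_comp]) (by rw [wt_comp]))
    (if_congr (by rw [onesF_comp_sdiff_card]) (by rw [onesF_comp_sdiff_card]) rfl) rfl

lemma isEquivar_Ba' {lam : Fin 2 → ℕ} (hlam : lam 0 + lam 1 = r) (a : ℕ) :
    IsEquivar (ent r (Ba' r lam a)) := by
  intro σ i j
  rw [ent_Ba' hlam a, ent_Ba' hlam a]
  refine if_congr (and_congr (by rw [wt_comp]) (by rw [wt_comp]))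
    (if_congr (by rw [onesF_comp_sdiff_card]) (by rw [onesF_comp_sdiff_card]) rfl) rfl

lemma B_eq {lam : Fin 2 → ℕ} (hlam : lam 0 + lam 1 = r) (a : ℕ) (ha : a ≤ lam 1) :
    Ba r lam a = ∑ e : Fin (min (lam 0) (lam 1) + 1),
      ((cBn lam a e : ℕ) : ℚ) • xifam r lam e := by
  have h0 := rep_decomp hlam (isEquivar_Ba hlam a ha)
    (fun i j h => by rw [ent_Ba hlam a ha, if_neg h])
  rw [h0]
  apply Finset.sum_congr rfl
  intro e _
  congr 1
  rw [ent_Ba hlam a ha, if_pos ⟨wt_iRep hlam, wt_jRep hlam (Fin.is_le e)⟩,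
    dist_rep hlam (Fin.is_le e), cBn_cast]

lemma B'_eq {lam : Fin 2 → ℕ} (hlam : lam 0 + lam 1 = r) (a : ℕ) :
    Ba' r lam a = ∑ e : Fin (min (lam 0) (lam 1) + 1),
      ((cBn' lam a e : ℕ) : ℚ) • xifam r lam e := by
  have h0 := rep_decomp hlam (isEquivar_Ba' hlam a)
    (fun i j h => by rw [ent_Ba' hlam a, if_neg h])
  rw [h0]
  apply Finset.sum_congr rfl
  intro e _
  congr 1
  rw [ent_Ba' hlam a, if_pos ⟨wt_iRep hlam, wt_jRep hlam (Fin.is_le e)⟩,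
    dist_rep hlam (Fin.is_le e), cBn'_cast]

/-! ### Independence of the ξ family -/

lemma xifam_indep {lam : Fin 2 → ℕ} (hlam : lam 0 + lam 1 = r) :
    LinearIndependent ℚ (xifam r lam) := by
  rw [Fintype.linearIndependent_iff]
  intro g hsum e0
  have h : ent r (∑ e, g e • xifam r lam e) = 0 := by rw [hsum, map_zero]
  rw [map_sum] at h
  have h2 : (∑ e, ent r (g e • xifam r lam e)) (iRep r lam) (jRep r lam e0) = 0 := by
    rw [h]
    rfl
  rw [Matrix.sum_apply] at h2
  have hterm : ∀ e : Fin (min (lam 0) (lam 1) + 1),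
      ent r (g e • xifam r lam e) (iRep r lam) (jRep r lam e0)
        = if e = e0 then g e else 0 := by
    intro e
    rw [show (g e • xifam r lam e) = g e • xi r lam (e:ℕ) from rfl, map_smul,
      Matrix.smul_apply, ent_xi, xiM, Matrix.of_apply]
    have hcond : (wt r (iRep r lam) = lam ∧ wt r (jRep r lam e0) = lam
        ∧ (onesF (jRep r lam e0) \ onesF (iRep r lam)).card = (e:ℕ)) ↔ e = e0 := by
      rw [dist_rep hlam (Fin.is_le e0)]
      constructor
      · rintro ⟨-, -, hh⟩
        exact Fin.ext hh.symm
      · rintro rfl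
        exact ⟨wt_iRep hlam, wt_jRep hlam (Fin.is_le e), rfl⟩
    rw [if_congr hcond rfl rfl]
    split_ifs <;> simp
  rw [Finset.sum_congr rfl fun e _ => hterm e, Finset.sum_ite_eq' Finset.univ e0] at h2
  simpa using h2

/-! ### Independence of the B families -/

lemma fam_indep_of_triangular {lam : Fin 2 → ℕ} (hlam : lam 0 + lam 1 = r)
    (fam : Fin (min (lam 0) (lam 1) + 1) → Module.End ℚ (TSpQ r))
    (c : ℕ → ℕ → ℕ)
    (hfam : ∀ a : Fin (min (lam 0) (lam 1) + 1),
      fam a = ∑ e : Fin (min (lam 0) (lam 1) + 1), ((c (a:ℕ) (e:ℕ) : ℕ) : ℚ) • xifam r lam e)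
    (hdiag : ∀ a : Fin (min (lam 0) (lam 1) + 1), c (a:ℕ) (a:ℕ) = 1)
    (htri : ∀ a e : Fin (min (lam 0) (lam 1) + 1), (a:ℕ) < (e:ℕ) → c (a:ℕ) (e:ℕ) = 0) :
    LinearIndependent ℚ fam := by
  set C : Matrix (Fin (min (lam 0) (lam 1) + 1)) (Fin (min (lam 0) (lam 1) + 1)) ℚ :=
    Matrix.of fun a e => ((c (a:ℕ) (e:ℕ) : ℕ) : ℚ) with hC
  have hdet : C.det = 1 := by
    rw [Matrix.det_of_lowerTriangular C ?htri]
    case htri =>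
      intro a e hae
      show ((c (a:ℕ) (e:ℕ) : ℕ) : ℚ) = 0
      rw [htri a e hae, Nat.cast_zero]
    · rw [Finset.prod_congr rfl fun a _ =>
        show C a a = 1 by
          show ((c (a:ℕ) (a:ℕ) : ℕ) : ℚ) = 1
          rw [hdiag a, Nat.cast_one]]
      exact Finset.prod_const_one
  rw [Fintype.linearIndependent_iff]
  intro g hsum a0
  have hxi := xifam_indep hlam
  rw [Fintype.linearIndependent_iff] at hxi
  have hcoef : ∀ e, (∑ a, g a * C a e) = 0 := by
    apply hxi (fun e => ∑ a, g a * C a e)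
    calc ∑ e, (∑ a, g a * C a e) • xifam r lam e
        = ∑ e, ∑ a, (g a * C a e) • xifam r lam e := by
          refine Finset.sum_congr rfl fun e _ => ?_
          rw [Finset.sum_smul]
      _ = ∑ a, ∑ e, (g a * C a e) • xifam r lam e := Finset.sum_comm
      _ = ∑ a, g a • fam a := by
          refine Finset.sum_congr rfl fun a _ => ?_
          rw [hfam a, Finset.smul_sum]
          refine Finset.sum_congr rfl fun e _ => ?_
          rw [smul_smul]
          rfl
      _ = 0 := hsum
  have h1 : Matrix.vecMul g C = 0 := funext fun e => hcoef e
  have h2 := congrArg (fun v => Matrix.vecMul v C⁻¹) h1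
  rw [Matrix.vecMul_vecMul, Matrix.mul_nonsing_inv _ (by rw [hdet]; exact isUnit_one),
    Matrix.vecMul_one, Matrix.zero_vecMul] at h2
  exact congrFun h2 a0

lemma Bfam_indep {lam : Fin 2 → ℕ} (hlam : lam 0 + lam 1 = r) :
    LinearIndependent ℚ (Bfam r lam) := by
  apply fam_indep_of_triangular hlam (Bfam r lam) (cBn lam)
  · intro a
    exact B_eq hlam (a:ℕ) (le_trans (Fin.is_le a) (min_le_right _ _))
  · intro a
    rw [cBn, if_pos le_rfl]
    simp
  · intro a e hae
    rw [cBn, if_neg (by omega)]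

lemma Bfam'_indep {lam : Fin 2 → ℕ} (hlam : lam 0 + lam 1 = r) :
    LinearIndependent ℚ (Bfam' r lam) := by
  apply fam_indep_of_triangular hlam (Bfam' r lam) (cBn' lam)
  · intro a
    exact B'_eq hlam (a:ℕ)
  · intro a
    rw [cBn', if_pos le_rfl]
    simp
  · intro a e hae
    rw [cBn', if_neg (by omega)]

lemma int_smul_inj : Function.Injective fun n : ℤ => n • (1:ℚ) := by
  intro a b h
  simp only [zsmul_eq_mul, mul_one] at h
  exact_mod_cast h

lemma Bfam_indep_int {lam : Fin 2 → ℕ} (hlam : lam 0 + lam 1 = r) :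
    LinearIndependent ℤ (Bfam r lam) :=
  (Bfam_indep hlam).restrict_scalars int_smul_inj

lemma Bfam'_indep_int {lam : Fin 2 → ℕ} (hlam : lam 0 + lam 1 = r) :
    LinearIndependent ℤ (Bfam' r lam) :=
  (Bfam'_indep hlam).restrict_scalars int_smul_inj

/-! ### Projection facts -/

lemma comp_perm_inj (i j : Fin r → Fin 2) (σ : Equiv.Perm (Fin r)) :
    (i ∘ ⇑σ = j ∘ ⇑σ) ↔ i = j := by
  constructor
  · intro h
    funext x
    have := congrFun h (σ.symm x)
    simpa using this
  · rintro rfl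
    rfl

lemma isEquivar_proj (lam : Fin 2 → ℕ) : IsEquivar (ent r (proj r lam)) := by
  intro σ i j
  rw [ent_proj, Matrix.diagonal_apply, Matrix.diagonal_apply]
  exact if_congr (comp_perm_inj i j σ) (if_congr (by rw [wt_comp]) rfl rfl) rfl

lemma proj_mem_intLat (lam : Fin 2 → ℕ) : proj r lam ∈ intLat r := by
  refine ⟨isEquivar_proj lam, fun i j => ?_⟩
  rw [ent_proj, Matrix.diagonal_apply]
  split_ifs
  · exact ⟨1, by simp⟩
  · exact ⟨0, by simp⟩
  · exact ⟨0, by simp⟩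

lemma proj_idem (lam : Fin 2 → ℕ) : proj r lam * proj r lam = proj r lam := by
  apply (ent r).injective
  rw [map_mul, ent_proj, Matrix.diagonal_mul_diagonal]
  have : (fun i => (if wt r i = lam then (1:ℚ) else 0) * (if wt r i = lam then 1 else 0))
      = fun i => if wt r i = lam then (1:ℚ) else 0 := by
    funext i
    by_cases h : wt r i = lam <;> simp [h]
  rw [this]

lemma proj_sandwich (lam : Fin 2 → ℕ) (M : Module.End ℚ (TSpQ r)) :
    proj r lam * ((proj r lam * M * proj r lam) * proj r lam) = proj r lam * M * proj r lam := by
  rw [mul_assoc (proj r lam * M) (proj r lam) (proj r lam), proj_idem,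
    ← mul_assoc (proj r lam) (proj r lam * M) (proj r lam),
    ← mul_assoc (proj r lam) (proj r lam) M, proj_idem]

/-! ### Membership in the Hecke lattice -/

lemma Ba_mem_heckeLat (lam : Fin 2 → ℕ) (a : ℕ) : Ba r lam a ∈ heckeLat r lam := by
  refine Submodule.mem_map.2 ⟨divPow r (Fop r) a * divPow r (Eop r) a, ?_, ?_⟩
  · rw [Subalgebra.mem_toSubmodule]
    exact mul_mem (Algebra.subset_adjoin (Or.inl ⟨a, Or.inr rfl⟩))
      (Algebra.subset_adjoin (Or.inl ⟨a, Or.inl rfl⟩))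
  · simp only [LinearMap.coe_comp, Function.comp_apply, LinearMap.mulLeft_apply,
      LinearMap.mulRight_apply]
    rw [Ba]
    noncomm_ring

lemma Ba'_mem_heckeLat (lam : Fin 2 → ℕ) (a : ℕ) : Ba' r lam a ∈ heckeLat r lam := by
  refine Submodule.mem_map.2 ⟨divPow r (Eop r) a * divPow r (Fop r) a, ?_, ?_⟩
  · rw [Subalgebra.mem_toSubmodule]
    exact mul_mem (Algebra.subset_adjoin (Or.inl ⟨a, Or.inl rfl⟩))
      (Algebra.subset_adjoin (Or.inl ⟨a, Or.inr rfl⟩))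
  · simp only [LinearMap.coe_comp, Function.comp_apply, LinearMap.mulLeft_apply,
      LinearMap.mulRight_apply]
    rw [Ba']
    noncomm_ring

lemma heckeLat_le_span {lam : Fin 2 → ℕ} (hlam : lam 0 + lam 1 = r) :
    heckeLat r lam ≤ Submodule.span ℤ (Set.range (xifam r lam)) := by
  rintro y hy
  obtain ⟨x, hx, rfl⟩ := Submodule.mem_map.1 hy
  rw [Subalgebra.mem_toSubmodule] at hx
  have hxL : x ∈ intLat r := SZ_le_intLat hx
  simp only [LinearMap.coe_comp, Function.comp_apply, LinearMap.mulLeft_apply,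
    LinearMap.mulRight_apply]
  set z := proj r lam * (x * proj r lam) with hz
  have hzL : z ∈ intLat r := mul_mem (proj_mem_intLat lam) (mul_mem hxL (proj_mem_intLat lam))
  have hzalt : z = proj r lam * x * proj r lam := by
    rw [hz]
    noncomm_ring
  have hfix : proj r lam ∘ₗ z ∘ₗ proj r lam = z := by
    show proj r lam * (z * proj r lam) = z
    conv_lhs => rw [hzalt]
    rw [proj_sandwich, ← hzalt]
  have hdec := rep_decomp hlam hzL.1 (fun i j h => ent_trunc hfix h)
  rw [hdec]
  apply Submodule.sum_mem
  intro e _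
  obtain ⟨n, hn⟩ := hzL.2 (iRep r lam) (jRep r lam e)
  have hns : ent r z (iRep r lam) (jRep r lam ↑e) • xi r lam ↑e = n • xi r lam ↑e := by
    rw [← hn]
    exact Int.cast_smul_eq_zsmul ℚ n (xi r lam (e:ℕ))
  rw [hns]
  exact Submodule.smul_mem _ _ (Submodule.subset_span ⟨e, rfl⟩)

/-! ### ξ in the span of the B family -/

lemma xi_mem_span_fam {lam : Fin 2 → ℕ}
    (fam : Fin (min (lam 0) (lam 1) + 1) → Module.End ℚ (TSpQ r)) (c : ℕ → ℕ → ℕ)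
    (hfam : ∀ a : Fin (min (lam 0) (lam 1) + 1),
      fam a = ∑ e : Fin (min (lam 0) (lam 1) + 1), ((c (a:ℕ) (e:ℕ) : ℕ) : ℚ) • xifam r lam e)
    (hdiag : ∀ a : Fin (min (lam 0) (lam 1) + 1), c (a:ℕ) (a:ℕ) = 1)
    (htri : ∀ a e : Fin (min (lam 0) (lam 1) + 1), (a:ℕ) < (e:ℕ) → c (a:ℕ) (e:ℕ) = 0) :
    ∀ e, xifam r lam e ∈ Submodule.span ℤ (Set.range fam) := by
  suffices h : ∀ n : ℕ, ∀ e : Fin (min (lam 0) (lam 1) + 1), (e : ℕ) = n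
      → xifam r lam e ∈ Submodule.span ℤ (Set.range fam) by
    exact fun e => h (e:ℕ) e rfl
  intro n
  induction n using Nat.strong_induction_on with
  | _ n ih =>
    intro e he
    have h1 : fam e = ((c (e:ℕ) (e:ℕ) : ℕ) : ℚ) • xifam r lam e
        + ∑ e' ∈ Finset.univ.erase e, ((c (e:ℕ) (e':ℕ) : ℕ) : ℚ) • xifam r lam e' := by
      rw [hfam e, Finset.add_sum_erase Finset.univ
        (fun e' : Fin (min (lam 0) (lam 1) + 1) =>
          ((c (e:ℕ) (e':ℕ) : ℕ) : ℚ) • xifam r lam e') (Finset.mem_univ e)]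
    rw [hdiag e, Nat.cast_one, one_smul] at h1
    have hsplit : xifam r lam e = fam e - ∑ e' ∈ Finset.univ.erase e,
        ((c (e:ℕ) (e':ℕ) : ℕ) : ℚ) • xifam r lam e' := by
      rw [h1]
      abel
    rw [hsplit]
    refine sub_mem (Submodule.subset_span ⟨e, rfl⟩) (Submodule.sum_mem _ fun e' he' => ?_)
    rcases lt_or_ge (e':ℕ) (e:ℕ) with hlt | hle
    · have hmem := ih (e':ℕ) (by omega) e' rfl
      have hzz : ((c (e:ℕ) (e':ℕ) : ℕ) : ℚ) • xifam r lam e'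
          = ((c (e:ℕ) (e':ℕ) : ℕ) : ℤ) • xifam r lam e' := by
        rw [← Int.cast_smul_eq_zsmul ℚ]
        norm_num
      rw [hzz]
      exact Submodule.smul_mem _ _ hmem
    · have hne : e' ≠ e := Finset.ne_of_mem_erase he'
      have hvne : (e':ℕ) ≠ (e:ℕ) := fun hh => hne (Fin.ext hh)
      have : c (e:ℕ) (e':ℕ) = 0 := htri e e' (by omega)
      rw [this]
      simp

lemma xi_mem_spanB {lam : Fin 2 → ℕ} (hlam : lam 0 + lam 1 = r) :
    ∀ e, xifam r lam e ∈ Submodule.span ℤ (Set.range (Bfam r lam)) := by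
  apply xi_mem_span_fam (Bfam r lam) (cBn lam)
  · intro a
    exact B_eq hlam (a:ℕ) (le_trans (Fin.is_le a) (min_le_right _ _))
  · intro a
    rw [cBn, if_pos le_rfl]
    simp
  · intro a e hae
    rw [cBn, if_neg (by omega)]

lemma xi_mem_spanB' {lam : Fin 2 → ℕ} (hlam : lam 0 + lam 1 = r) :
    ∀ e, xifam r lam e ∈ Submodule.span ℤ (Set.range (Bfam' r lam)) := by
  apply xi_mem_span_fam (Bfam' r lam) (cBn' lam)
  · intro a
    exact B'_eq hlam (a:ℕ)
  · intro a
    rw [cBn', if_pos le_rfl]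
    simp
  · intro a e hae
    rw [cBn', if_neg (by omega)]

/-! ### The span equalities for the lattice -/

lemma span_Bfam_eq {lam : Fin 2 → ℕ} (hlam : lam 0 + lam 1 = r) :
    Submodule.span ℤ (Set.range (Bfam r lam)) = heckeLat r lam := by
  apply le_antisymm
  · rw [Submodule.span_le]
    rintro z ⟨a, rfl⟩
    exact Ba_mem_heckeLat lam (a:ℕ)
  · intro z hz
    have h1 := heckeLat_le_span hlam hz
    refine Submodule.span_le.2 ?_ h1
    rintro w ⟨e, rfl⟩
    exact xi_mem_spanB hlam e

lemma span_Bfam'_eq {lam : Fin 2 → ℕ} (hlam : lam 0 + lam 1 = r) :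
    Submodule.span ℤ (Set.range (Bfam' r lam)) = heckeLat r lam := by
  apply le_antisymm
  · rw [Submodule.span_le]
    rintro z ⟨a, rfl⟩
    exact Ba'_mem_heckeLat lam (a:ℕ)
  · intro z hz
    have h1 := heckeLat_le_span hlam hz
    refine Submodule.span_le.2 ?_ h1
    rintro w ⟨e, rfl⟩
    exact xi_mem_spanB' hlam e

noncomputable def basisB {lam : Fin 2 → ℕ} (hlam : lam 0 + lam 1 = r) :
    Module.Basis (Fin (min (lam 0) (lam 1) + 1)) ℤ (heckeLat r lam) :=
  (Module.Basis.span (Bfam_indep_int hlam)).map (LinearEquiv.ofEq _ _ (span_Bfam_eq hlam))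

lemma basisB_apply {lam : Fin 2 → ℕ} (hlam : lam 0 + lam 1 = r)
    (a : Fin (min (lam 0) (lam 1) + 1)) :
    ((basisB hlam a : heckeLat r lam) : Module.End ℚ (TSpQ r)) = Bfam r lam a := by
  rw [basisB, Module.Basis.map_apply, LinearEquiv.coe_ofEq_apply, Module.Basis.span_apply]

noncomputable def basisB' {lam : Fin 2 → ℕ} (hlam : lam 0 + lam 1 = r) :
    Module.Basis (Fin (min (lam 0) (lam 1) + 1)) ℤ (heckeLat r lam) :=
  (Module.Basis.span (Bfam'_indep_int hlam)).map (LinearEquiv.ofEq _ _ (span_Bfam'_eq hlam))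

lemma basisB'_apply {lam : Fin 2 → ℕ} (hlam : lam 0 + lam 1 = r)
    (a : Fin (min (lam 0) (lam 1) + 1)) :
    ((basisB' hlam a : heckeLat r lam) : Module.End ℚ (TSpQ r)) = Bfam' r lam a := by
  rw [basisB', Module.Basis.map_apply, LinearEquiv.coe_ofEq_apply, Module.Basis.span_apply]

/-! ### Algebra structure of the bimodule -/

lemma bim_mul {lam : Fin 2 → ℕ} {x y : Module.End ℚ (TSpQ r)}
    (hx : x ∈ heckeBimodule r lam lam) (hy : y ∈ heckeBimodule r lam lam) :
    x * y ∈ heckeBimodule r lam lam := by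
  obtain ⟨hx1, hx2⟩ := hx
  obtain ⟨hy1, hy2⟩ := hy
  constructor
  · intro σ
    have hx1' : x * placePerm r σ = placePerm r σ * x := hx1 σ
    have hy1' : y * placePerm r σ = placePerm r σ * y := hy1 σ
    show (x * y) * placePerm r σ = placePerm r σ * (x * y)
    rw [mul_assoc, hy1', ← mul_assoc, hx1', mul_assoc]
  · have hx2' : proj r lam * (x * proj r lam) = x := hx2
    have hy2' : proj r lam * (y * proj r lam) = y := hy2
    have hxl : proj r lam * x = x := by
      conv_lhs => rw [← hx2']
      rw [← mul_assoc, proj_idem, hx2']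
    have hyr : y * proj r lam = y := by
      conv_lhs => rw [← hy2']
      rw [mul_assoc (proj r lam) (y * proj r lam) (proj r lam),
        mul_assoc y (proj r lam) (proj r lam), proj_idem, hy2']
    show proj r lam * ((x * y) * proj r lam) = x * y
    rw [mul_assoc x y (proj r lam), hyr, ← mul_assoc (proj r lam) x y, hxl]

lemma bim_projL {lam : Fin 2 → ℕ} {x : Module.End ℚ (TSpQ r)}
    (hx : x ∈ heckeBimodule r lam lam) : proj r lam * x = x := by
  have hx2' : proj r lam * (x * proj r lam) = x := hx.2
  conv_lhs => rw [← hx2']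
  rw [← mul_assoc, proj_idem, hx2']

lemma bim_projR {lam : Fin 2 → ℕ} {x : Module.End ℚ (TSpQ r)}
    (hx : x ∈ heckeBimodule r lam lam) : x * proj r lam = x := by
  have hx2' : proj r lam * (x * proj r lam) = x := hx.2
  conv_lhs => rw [← hx2']
  rw [mul_assoc (proj r lam) (x * proj r lam) (proj r lam),
    mul_assoc x (proj r lam) (proj r lam), proj_idem, hx2']

lemma xi_mem_bim (lam : Fin 2 → ℕ) (d : ℕ) : xi r lam d ∈ heckeBimodule r lam lam := by
  constructor
  · apply (commute_iff_isEquivar _).2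
    rw [ent_xi]
    exact isEquivar_xiM lam d
  · show proj r lam * (xi r lam d * proj r lam) = xi r lam d
    apply (ent r).injective
    rw [map_mul, map_mul, ent_proj, ent_xi]
    ext i j
    rw [Matrix.diagonal_mul, Matrix.mul_diagonal]
    by_cases h1 : wt r i = lam
    · by_cases h2 : wt r j = lam
      · rw [if_pos h1, if_pos h2, one_mul, mul_one]
      · rw [show xiM r lam d i j = 0 from by
          rw [xiM, Matrix.of_apply, if_neg (by tauto)]]
        rw [if_neg h2]
        ring
    · rw [show xiM r lam d i j = 0 from by
        rw [xiM, Matrix.of_apply, if_neg (by tauto)], if_neg h1]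
      ring

lemma proj_mem_bim (lam : Fin 2 → ℕ) : proj r lam ∈ heckeBimodule r lam lam := by
  constructor
  · exact (commute_iff_isEquivar _).2 (isEquivar_proj lam)
  · show proj r lam * (proj r lam * proj r lam) = proj r lam
    rw [proj_idem, proj_idem]

lemma bim_symm {lam : Fin 2 → ℕ} (hlam : lam 0 + lam 1 = r) {x : Module.End ℚ (TSpQ r)}
    (hx : x ∈ heckeBimodule r lam lam) (i j : Fin r → Fin 2) :
    ent r x i j = ent r x j i := by
  by_cases hw : wt r i = lam ∧ wt r j = lam
  · have hci : (onesF i).card = lam 1 := (wt_eq_iff hlam i).1 hw.1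
    have hcj : (onesF j).card = lam 1 := (wt_eq_iff hlam j).1 hw.2
    exact entry_const hlam ((commute_iff_isEquivar x).1 hx.1) hw.1 hw.2 hw.2 hw.1
      (sdiff_card_symm (by omega)).symm
  · rw [ent_trunc hx.2 hw, ent_trunc hx.2 (fun hh => hw ⟨hh.2, hh.1⟩)]

lemma bim_commute {lam : Fin 2 → ℕ} (hlam : lam 0 + lam 1 = r) {x y : Module.End ℚ (TSpQ r)}
    (hx : x ∈ heckeBimodule r lam lam) (hy : y ∈ heckeBimodule r lam lam) :
    x * y = y * x := by
  have hxy := bim_mul hx hy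
  apply (ent r).injective
  ext i j
  have h1 : ent r (x * y) i j = ent r (x * y) j i := bim_symm hlam hxy i j
  rw [map_mul, Matrix.mul_apply, Matrix.mul_apply] at h1
  rw [map_mul, map_mul, Matrix.mul_apply, Matrix.mul_apply, h1]
  apply Finset.sum_congr rfl
  intro k _
  rw [bim_symm hlam hx j k, bim_symm hlam hy k i]
  ring

lemma bim_eq_span_xi {lam : Fin 2 → ℕ} (hlam : lam 0 + lam 1 = r) :
    heckeBimodule r lam lam = Submodule.span ℚ (Set.range (xifam r lam)) := by
  apply le_antisymm
  · intro x hx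
    rw [rep_decomp hlam ((commute_iff_isEquivar x).1 hx.1) (fun i j h => ent_trunc hx.2 h)]
    exact Submodule.sum_mem _ fun e _ =>
      Submodule.smul_mem _ _ (Submodule.subset_span ⟨e, rfl⟩)
  · rw [Submodule.span_le]
    rintro z ⟨e, rfl⟩
    exact xi_mem_bim lam (e:ℕ)

lemma bim_finrank {lam : Fin 2 → ℕ} (hlam : lam 0 + lam 1 = r) :
    Module.finrank ℚ (heckeBimodule r lam lam) = 1 + min (lam 0) (lam 1) := by
  have b : Module.Basis (Fin (min (lam 0) (lam 1) + 1)) ℚ (heckeBimodule r lam lam) :=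
    (Module.Basis.span (xifam_indep hlam)).map (LinearEquiv.ofEq _ _ (bim_eq_span_xi hlam).symm)
  rw [Module.finrank_eq_card_basis b, Fintype.card_fin]
  omega

/-! ### Generation by the single element 1_λ f e 1_λ -/

lemma divPow_one (y : Module.End ℚ (TSpQ r)) : divPow r y 1 = y := by
  rw [divPow]
  simp

lemma xi0_eq_proj (lam : Fin 2 → ℕ) {hlam : lam 0 + lam 1 = r} :
    xi r lam 0 = proj r lam := by
  apply (ent r).injective
  rw [ent_xi, ent_proj]
  ext i j
  rw [xiM, Matrix.of_apply, Matrix.diagonal_apply]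
  by_cases hij : i = j
  · subst hij
    by_cases hw : wt r i = lam <;> simp [hw, Finset.sdiff_self]
  · rw [if_neg hij, if_neg]
    rintro ⟨h1, h2, h3⟩
    apply hij
    have hci : (onesF i).card = lam 1 := (wt_eq_iff hlam i).1 h1
    have hcj : (onesF j).card = lam 1 := (wt_eq_iff hlam j).1 h2
    rw [Finset.card_eq_zero, Finset.sdiff_eq_empty_iff_subset] at h3
    exact (eq_of_onesF_eq (Finset.eq_of_subset_of_card_le h3 (by omega)).symm)

lemma xi_one_eq {lam : Fin 2 → ℕ} (hlam : lam 0 + lam 1 = r)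
    (hm : 1 ≤ min (lam 0) (lam 1)) :
    xi r lam 1 = Ba r lam 1 - ((lam 1 : ℕ) : ℚ) • xi r lam 0 := by
  have hl1 : 1 ≤ lam 1 := le_trans hm (min_le_right _ _)
  apply (ent r).injective
  rw [map_sub, map_smul, ent_xi, ent_xi]
  ext i j
  rw [Matrix.sub_apply, Matrix.smul_apply, ent_Ba hlam 1 hl1, xiM, xiM,
    Matrix.of_apply, Matrix.of_apply]
  by_cases hw : wt r i = lam ∧ wt r j = lam
  · rw [if_pos hw]
    set d := (onesF j \ onesF i).card with hdd
    rcases (by omega : d = 0 ∨ d = 1 ∨ 2 ≤ d) with hd | hd | hd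
    · rw [hd, if_neg (by rintro ⟨-, -, h⟩; omega), if_pos (by omega : (0:ℕ) ≤ 1),
        if_pos ⟨hw.1, hw.2, rfl⟩]
      simp [Nat.choose_one_right]
    · rw [hd, if_pos ⟨hw.1, hw.2, rfl⟩, if_pos (le_refl 1), Nat.sub_self,
        Nat.choose_zero_right, if_neg (by rintro ⟨-, -, h⟩; omega)]
      simp
    · rw [if_neg (by rintro ⟨-, -, h⟩; omega), if_neg (by omega),
        if_neg (by rintro ⟨-, -, h⟩; omega)]
      simp
  · rw [if_neg hw, if_neg (by tauto), if_neg (by tauto)]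
    simp

lemma sdiff_triangle3 (A B C : Finset (Fin r)) :
    (A \ C).card ≤ (A \ B).card + (B \ C).card := by
  have hsub : A \ C ⊆ (A \ B) ∪ (B \ C) := by
    intro l hl
    simp only [Finset.mem_sdiff, Finset.mem_union] at *
    by_cases hB : l ∈ B
    · exact Or.inr ⟨hB, hl.2⟩
    · exact Or.inl ⟨hl.1, hB⟩
  exact le_trans (Finset.card_le_card hsub) (Finset.card_union_le _ _)

lemma ent_xi_mul (lam : Fin 2 → ℕ) (d1 d2 : ℕ) (i j : Fin r → Fin 2) :
    ent r (xi r lam d1 * xi r lam d2) i j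
      = ((Finset.univ.filter fun k : Fin r → Fin 2 =>
          (wt r i = lam ∧ wt r k = lam ∧ (onesF k \ onesF i).card = d1)
          ∧ (wt r k = lam ∧ wt r j = lam ∧ (onesF j \ onesF k).card = d2)).card : ℚ) := by
  rw [map_mul, ent_xi, ent_xi, Matrix.mul_apply]
  have hterm : ∀ k : Fin r → Fin 2, xiM r lam d1 i k * xiM r lam d2 k j
      = (if wt r i = lam ∧ wt r k = lam ∧ (onesF k \ onesF i).card = d1
          then (1:ℚ) else 0)
        * (if wt r k = lam ∧ wt r j = lam ∧ (onesF j \ onesF k).card = d2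
          then (1:ℚ) else 0) := fun k => rfl
  rw [Finset.sum_congr rfl fun k _ => hterm k, sum_ite_card]
  ring

lemma step_witness {lam : Fin 2 → ℕ} (hlam : lam 0 + lam 1 = r) {d : ℕ}
    (hd : d + 1 ≤ min (lam 0) (lam 1)) :
    ∃ k : Fin r → Fin 2, wt r k = lam ∧ (onesF k \ onesF (iRep r lam)).card = 1
      ∧ (onesF (jRep r lam (d+1)) \ onesF k).card = d := by
  have hwi : wt r (iRep r lam) = lam := wt_iRep hlam
  have hwj : wt r (jRep r lam (d+1)) = lam := wt_jRep hlam hd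
  have hdist : (onesF (jRep r lam (d+1)) \ onesF (iRep r lam)).card = d + 1 :=
    dist_rep hlam hd
  have hci : (onesF (iRep r lam)).card = lam 1 := (wt_eq_iff hlam _).1 hwi
  have hcj : (onesF (jRep r lam (d+1))).card = lam 1 := (wt_eq_iff hlam _).1 hwj
  have hdist' : (onesF (iRep r lam) \ onesF (jRep r lam (d+1))).card = d + 1 := by
    rw [sdiff_card_symm (by omega)]
    exact hdist
  obtain ⟨x, hx⟩ := Finset.card_pos.1
    (by omega : 0 < (onesF (jRep r lam (d+1)) \ onesF (iRep r lam)).card)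
  obtain ⟨y, hy⟩ := Finset.card_pos.1
    (by omega : 0 < (onesF (iRep r lam) \ onesF (jRep r lam (d+1))).card)
  have hx' := Finset.mem_sdiff.1 hx
  have hy' := Finset.mem_sdiff.1 hy
  have hl1 : 1 ≤ lam 1 := by
    have := le_trans hd (min_le_right _ _)
    omega
  have hxy : x ≠ y := fun h => hx'.2 (h ▸ hy'.1)
  refine ⟨ofOnes ((onesF (iRep r lam) \ {y}) ∪ {x}), ?_, ?_, ?_⟩
  · rw [wt_eq_iff hlam, onesF_ofOnes]
    have hdisj : Disjoint (onesF (iRep r lam) \ {y}) {x} := by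
      rw [Finset.disjoint_right]
      intro a ha
      rw [Finset.mem_singleton] at ha
      subst ha
      rw [Finset.mem_sdiff]
      rintro ⟨h1, -⟩
      exact hx'.2 h1
    rw [Finset.card_union_of_disjoint hdisj,
      Finset.card_sdiff_of_subset (Finset.singleton_subset_iff.2 hy'.1), hci,
      Finset.card_singleton, Finset.card_singleton]
    omega
  · rw [onesF_ofOnes]
    have he : ((onesF (iRep r lam) \ {y}) ∪ {x}) \ onesF (iRep r lam) = {x} := by
      ext l
      simp only [Finset.mem_sdiff, Finset.mem_union, Finset.mem_singleton]
      constructor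
      · rintro ⟨⟨h1, -⟩ | rfl, h3⟩
        · exact absurd h1 h3
        · rfl
      · rintro rfl
        exact ⟨Or.inr rfl, hx'.2⟩
    rw [he, Finset.card_singleton]
  · rw [onesF_ofOnes]
    have he : onesF (jRep r lam (d+1)) \ ((onesF (iRep r lam) \ {y}) ∪ {x})
        = (onesF (jRep r lam (d+1)) \ onesF (iRep r lam)).erase x := by
      ext l
      simp only [Finset.mem_sdiff, Finset.mem_union, Finset.mem_singleton,
        Finset.mem_erase, not_or, not_and, not_not]
      constructor
      · rintro ⟨h1, h2, h3⟩
        refine ⟨h3, h1, fun hli => ?_⟩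
        have := h2 hli
        subst this
        exact hy'.2 h1
      · rintro ⟨h1, h2, h3⟩
        exact ⟨h2, fun hli => absurd hli h3, h1⟩
    rw [he, Finset.card_erase_of_mem hx, hdist]
    omega

lemma step_expand {lam : Fin 2 → ℕ} (hlam : lam 0 + lam 1 = r) {d : ℕ}
    (hd : d + 1 ≤ min (lam 0) (lam 1)) :
    ∃ gam : Fin (min (lam 0) (lam 1) + 1) → ℚ,
      xi r lam 1 * xi r lam d = ∑ e, gam e • xifam r lam e
      ∧ (∀ e : Fin (min (lam 0) (lam 1) + 1), d + 1 < (e:ℕ) → gam e = 0)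
      ∧ gam ⟨d+1, by omega⟩ ≠ 0 := by
  have hmem : xi r lam 1 * xi r lam d ∈ heckeBimodule r lam lam :=
    bim_mul (xi_mem_bim _ _) (xi_mem_bim _ _)
  refine ⟨fun e => ent r (xi r lam 1 * xi r lam d) (iRep r lam) (jRep r lam e),
    rep_decomp hlam ((commute_iff_isEquivar _).1 hmem.1) (fun i j h => ent_trunc hmem.2 h),
    ?_, ?_⟩
  · intro e he
    show ent r (xi r lam 1 * xi r lam d) (iRep r lam) (jRep r lam (e:ℕ)) = 0
    rw [ent_xi_mul]
    rw [show ((0:ℚ) = ((0:ℕ):ℚ)) from by norm_num]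
    rw [Nat.cast_inj]
    rw [Finset.card_eq_zero, Finset.filter_eq_empty_iff]
    intro k _
    rintro ⟨⟨-, -, h1⟩, -, -, h2⟩
    have htr := sdiff_triangle3 (onesF (jRep r lam (e:ℕ))) (onesF k) (onesF (iRep r lam))
    rw [dist_rep hlam (Fin.is_le e)] at htr
    omega
  · show ent r (xi r lam 1 * xi r lam d) (iRep r lam) (jRep r lam (d+1)) ≠ 0
    rw [ent_xi_mul]
    obtain ⟨k, hk1, hk2, hk3⟩ := step_witness hlam hd
    have hmemk : k ∈ Finset.univ.filter fun k : Fin r → Fin 2 =>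
        (wt r (iRep r lam) = lam ∧ wt r k = lam ∧ (onesF k \ onesF (iRep r lam)).card = 1)
        ∧ (wt r k = lam ∧ wt r (jRep r lam (d+1)) = lam
          ∧ (onesF (jRep r lam (d+1)) \ onesF k).card = d) :=
      Finset.mem_filter.2 ⟨Finset.mem_univ _,
        ⟨wt_iRep hlam, hk1, hk2⟩, hk1, wt_jRep hlam hd, hk3⟩
    exact Nat.cast_ne_zero.2 (Finset.card_pos.2 ⟨k, hmemk⟩).ne'

lemma xi_mem_W {lam : Fin 2 → ℕ} (hlam : lam 0 + lam 1 = r) :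
    ∀ d : ℕ, d ≤ min (lam 0) (lam 1) →
      xi r lam d ∈ Submodule.span ℚ ({proj r lam} ∪
        Set.range fun k : ℕ => (proj r lam * (Fop r * Eop r) * proj r lam) ^ (k + 1)) := by
  set G := proj r lam * (Fop r * Eop r) * proj r lam with hG
  set W := Submodule.span ℚ ({proj r lam} ∪ Set.range fun k : ℕ => G ^ (k + 1)) with hW
  have hGBa : G = Ba r lam 1 := by rw [hG, Ba, divPow_one, divPow_one]
  have hGW : G ∈ W := Submodule.subset_span (Or.inr ⟨0, pow_one G⟩)
  have hPW : proj r lam ∈ W := Submodule.subset_span (Or.inl rfl)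
  have hGP : G * proj r lam = G := by
    rw [hG, mul_assoc (proj r lam * (Fop r * Eop r)) (proj r lam) (proj r lam), proj_idem]
  have hWmul : ∀ w ∈ W, G * w ∈ W := by
    intro w hw
    induction hw using Submodule.span_induction with
    | mem z hz =>
      rcases hz with hz | ⟨k, rfl⟩
      · rcases Set.mem_singleton_iff.1 hz with rfl
        rw [hGP]
        exact hGW
      · rw [← pow_succ']
        exact Submodule.subset_span (Or.inr ⟨k+1, rfl⟩)
    | zero =>
      rw [mul_zero]
      exact Submodule.zero_mem W
    | add a b ha hb iha ihb =>
      rw [mul_add]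
      exact add_mem iha ihb
    | smul c a ha iha =>
      rw [mul_smul_comm]
      exact Submodule.smul_mem _ _ iha
  intro d
  induction d using Nat.strong_induction_on with
  | _ d ih =>
    intro hdm
    match d, ih, hdm with
    | 0, ih, hdm =>
      rw [xi0_eq_proj lam (hlam := hlam)]
      exact hPW
    | 1, ih, hdm =>
      rw [xi_one_eq hlam (by omega), ← hGBa, xi0_eq_proj lam (hlam := hlam)]
      exact sub_mem hGW (Submodule.smul_mem _ _ hPW)
    | (d+2), ih, hdm =>
      obtain ⟨gam, hgam, hzero, hne⟩ := step_expand hlam (d := d+1) (by omega)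
      have hx1 : xi r lam (d+1) ∈ W := ih (d+1) (by omega) (by omega)
      have hxiP : proj r lam * xi r lam (d+1) = xi r lam (d+1) :=
        bim_projL (xi_mem_bim lam (d+1))
      have hprod : xi r lam 1 * xi r lam (d+1) ∈ W := by
        rw [xi_one_eq hlam (by omega), xi0_eq_proj lam (hlam := hlam), sub_mul,
          smul_mul_assoc, hxiP, ← hGBa]
        exact sub_mem (hWmul _ hx1) (Submodule.smul_mem _ _ hx1)
      set e0 : Fin (min (lam 0) (lam 1) + 1) := ⟨d+2, by omega⟩ with he0
      have hsplit : gam e0 • xifam r lam e0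
          = xi r lam 1 * xi r lam (d+1)
            - ∑ e ∈ Finset.univ.erase e0, gam e • xifam r lam e := by
        rw [hgam, ← Finset.add_sum_erase Finset.univ
          (fun e => gam e • xifam r lam e) (Finset.mem_univ e0)]
        abel
      have hrest : ∑ e ∈ Finset.univ.erase e0, gam e • xifam r lam e ∈ W := by
        apply Submodule.sum_mem
        intro e he
        rcases lt_or_ge (e:ℕ) (d+2) with hlt | hge
        · exact Submodule.smul_mem _ _ (ih (e:ℕ) (by omega) (Fin.is_le e))
        · have hne' : e ≠ e0 := Finset.ne_of_mem_erase he
          have hvne : (e:ℕ) ≠ d+2 := fun hh => hne' (Fin.ext hh)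
          rw [hzero e (by omega), zero_smul]
          exact Submodule.zero_mem W
      have hfinal : xi r lam (d+2) = (gam e0)⁻¹ • (gam e0 • xifam r lam e0) := by
        rw [smul_smul, inv_mul_cancel₀ hne, one_smul]
        rfl
      rw [hfinal, hsplit]
      exact Submodule.smul_mem _ _ (sub_mem hprod hrest)

lemma bim_eq_span_G {lam : Fin 2 → ℕ} (hlam : lam 0 + lam 1 = r) :
    heckeBimodule r lam lam = Submodule.span ℚ ({proj r lam} ∪
      Set.range fun k : ℕ => (proj r lam * (Fop r * Eop r) * proj r lam) ^ (k + 1)) := by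
  set G := proj r lam * (Fop r * Eop r) * proj r lam with hG
  have hGBa : G = Ba r lam 1 := by rw [hG, Ba, divPow_one, divPow_one]
  have hGbim : G ∈ heckeBimodule r lam lam := by
    constructor
    · apply (commute_iff_isEquivar _).2
      rw [hG, map_mul, map_mul]
      refine isEquivar_mul (isEquivar_mul (isEquivar_proj lam) ?_) (isEquivar_proj lam)
      rw [map_mul]
      have hE : IsEquivar (ent r (Eop r)) := by
        have h1 := ent_divE (r := r) 1
        intro σ i j
        rw [show Eop r = divPow r (Eop r) 1 from (divPow_one _).symm, ent_divE, ent_divE]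
        exact if_congr (and_congr (onesF_comp_subset i j σ)
          (by rw [onesF_comp_sdiff_card])) rfl rfl
      have hF : IsEquivar (ent r (Fop r)) := by
        intro σ i j
        rw [show Fop r = divPow r (Fop r) 1 from (divPow_one _).symm, ent_divF, ent_divF]
        exact if_congr (and_congr (onesF_comp_subset j i σ)
          (by rw [onesF_comp_sdiff_card])) rfl rfl
      exact isEquivar_mul hF hE
    · show proj r lam * (G * proj r lam) = G
      conv_lhs => rw [hG]
      rw [proj_sandwich, ← hG]
  apply le_antisymm
  · intro x hx
    rw [rep_decomp hlam ((commute_iff_isEquivar x).1 hx.1) (fun i j h => ent_trunc hx.2 h)]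
    exact Submodule.sum_mem _ fun e _ =>
      Submodule.smul_mem _ _ (xi_mem_W hlam (e:ℕ) (Fin.is_le e))
  · rw [Submodule.span_le]
    rintro z (hz | ⟨k, rfl⟩)
    · rcases Set.mem_singleton_iff.1 hz with rfl
      exact proj_mem_bim lam
    · induction k with
      | zero =>
        show G ^ 1 ∈ heckeBimodule r lam lam
        rw [pow_one]
        exact hGbim
      | succ k ihk =>
        show G ^ (k + 1 + 1) ∈ heckeBimodule r lam lam
        rw [pow_succ]
        exact bim_mul ihk hGbim

end Aux

theorem gl2_hecke_structure
    (lam : Fin 2 → ℕ) (hlam : lam 0 + lam 1 = r) :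
    -- `ℤ`-basis `1_λ f^{(a)} e^{(a)} 1_λ`, `0 ≤ a ≤ min(λ₁,λ₂)`:
    (∃ b : Module.Basis (Fin (min (lam 0) (lam 1) + 1)) ℤ ↥(heckeLat r lam),
      ∀ a, (b a : Module.End ℚ (TSpQ r))
        = proj r lam * (divPow r (Fop r) (a : ℕ) * divPow r (Eop r) (a : ℕ)) * proj r lam) ∧
    -- `ℤ`-basis `1_λ e^{(a)} f^{(a)} 1_λ`, `0 ≤ a ≤ min(λ₁,λ₂)`:
    (∃ b : Module.Basis (Fin (min (lam 0) (lam 1) + 1)) ℤ ↥(heckeLat r lam),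
      ∀ a, (b a : Module.End ℚ (TSpQ r))
        = proj r lam * (divPow r (Eop r) (a : ℕ) * divPow r (Fop r) (a : ℕ)) * proj r lam) ∧
    -- `dim S(λ) = 1 + min(λ₁,λ₂)`:
    Module.finrank ℚ ↥(heckeBimodule r lam lam) = 1 + min (lam 0) (lam 1) ∧
    -- `S(λ)` is commutative:
    (∀ x y : Module.End ℚ (TSpQ r),
      x ∈ heckeBimodule r lam lam → y ∈ heckeBimodule r lam lam → x * y = y * x) ∧
    -- `S(λ)` is generated (as a unital algebra, with unit `1_λ`) by `1_λ f e 1_λ`: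
    heckeBimodule r lam lam
      = Submodule.span ℚ ({proj r lam} ∪
          Set.range fun k : ℕ => (proj r lam * (Fop r * Eop r) * proj r lam) ^ (k + 1)) := by
  refine ⟨⟨basisB hlam, fun a => ?_⟩, ⟨basisB' hlam, fun a => ?_⟩, bim_finrank hlam,
    fun x y hx hy => bim_commute hlam hx hy, bim_eq_span_G hlam⟩
  · rw [basisB_apply hlam a]
    rfl
  · rw [basisB'_apply hlam a]
    rfl

end SchurPaper
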